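/- arXiv:2501.06415 — 7 statements merged into one kernel-verified Lean document; each statement's English description precedes it below -/
import Mathlib

section
/- Let ℓ ≥ 2 and n ≥ 3 be integers and set a = ℓ + n - 1. If for some integer r with 1 ≤ r ≤ n-2 the set {0, 1, ..., ℓ} ∪ {ℓ + r, ℓ + 2r, ..., ℓ + (n-2)r} is a complete system of representatives modulo a, then r = 1. -/
theorem stmt0 (ℓ n r : ℤ) (hℓ : 2 ≤ ℓ) (hn : 3 ≤ n) (a : ℤ) (ha : a = ℓ + n - 1)
    (hr1 : 1 ≤ r) (hr2 : r ≤ n - 2)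
    (hcomp : ∀ z : ℤ, ∃! s, s ∈ (Set.Icc (0 : ℤ) ℓ ∪
        {x : ℤ | ∃ i : ℤ, 1 ≤ i ∧ i ≤ n - 2 ∧ x = ℓ + i * r}) ∧ s ≡ z [ZMOD a]) :
    r = 1 := by
  by_contra hr
  have hr2' : 2 ≤ r := by omega
  have ha0 : 0 < a := by omega
  -- F2 : every t ∈ [1, n-2] is hit by some i*r mod a
  have hF2 : ∀ t : ℤ, 1 ≤ t → t ≤ n - 2 → ∃ i : ℤ, 1 ≤ i ∧ i ≤ n - 2 ∧ a ∣ i * r - t := by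
    intro t ht1 ht2
    obtain ⟨s, ⟨hmem, hcong⟩, _⟩ := hcomp (ℓ + t)
    have hdvd : a ∣ (ℓ + t) - s := Int.ModEq.dvd hcong
    rcases hmem with hIcc | ⟨i, hi1, hi2, heq⟩
    · exfalso
      rw [Set.mem_Icc] at hIcc
      have hle := Int.le_of_dvd (by omega) hdvd
      omega
    · refine ⟨i, hi1, hi2, ?_⟩
      rw [heq] at hdvd
      have e : (ℓ + t) - (ℓ + i * r) = -(i * r - t) := by ring
      rw [e, dvd_neg] at hdvd
      exact hdvd
  -- F1 : for each i ∈ [1, n-2], i*r mod a lands in [1, n-2]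
  have hF1 : ∀ i : ℤ, 1 ≤ i → i ≤ n - 2 → ∃ t : ℤ, 1 ≤ t ∧ t ≤ n - 2 ∧ a ∣ i * r - t := by
    intro i hi1 hi2
    have hir2 : 2 ≤ i * r := by nlinarith
    set t := (i * r) % a with htdef
    have ht0 : 0 ≤ t := Int.emod_nonneg _ (by omega)
    have hta : t < a := Int.emod_lt_of_pos _ ha0
    have hdt : a ∣ i * r - t := Int.dvd_self_sub_of_emod_eq rfl
    obtain ⟨s, hs, huniq⟩ := hcomp (ℓ + i * r)
    have hself : s = ℓ + i * r :=
      (huniq (ℓ + i * r) ⟨Or.inr ⟨i, hi1, hi2, rfl⟩, Int.ModEq.refl _⟩).symm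
    rcases lt_or_ge t 1 with ht1 | ht1
    · -- t = 0 : then ℓ is also congruent, contradiction
      exfalso
      have ht00 : t = 0 := by omega
      have hdvd0 : a ∣ (ℓ + i * r) - ℓ := by
        have e : (ℓ + i * r) - ℓ = i * r - t := by omega
        rw [e]; exact hdt
      have hcl : ℓ = s := huniq ℓ ⟨Or.inl (Set.mem_Icc.mpr ⟨by omega, le_refl ℓ⟩),
        Int.modEq_iff_dvd.mpr hdvd0⟩
      omega
    · rcases le_or_gt t (n - 2) with ht2 | ht2
      · exact ⟨t, ht1, ht2, hdt⟩
      · -- t ∈ [n-1, a-1] : then ℓ + t - a ∈ [0, ℓ-1] is also congruent, contradiction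
        exfalso
        have hdvd0 : a ∣ (ℓ + i * r) - (ℓ + t - a) := by
          have e : (ℓ + i * r) - (ℓ + t - a) = (i * r - t) + a := by ring
          rw [e]; exact dvd_add hdt dvd_rfl
        have hcl : ℓ + t - a = s := huniq (ℓ + t - a)
          ⟨Or.inl (Set.mem_Icc.mpr ⟨by omega, by omega⟩), Int.modEq_iff_dvd.mpr hdvd0⟩
        omega
  -- get j with j*r ≡ 1
  obtain ⟨j, hj1, hj2, hjd⟩ := hF2 1 le_rfl (by omega)
  have hj2' : 2 ≤ j := by
    by_contra hj
    have hje : j = 1 := by omega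
    rw [hje, one_mul] at hjd
    have := Int.le_of_dvd (by omega) hjd
    omega
  -- F1 at j - 1 forces r ≥ ℓ + 2
  obtain ⟨t, ht1, ht2, htd⟩ := hF1 (j - 1) (by omega) (by omega)
  have h5 : a ∣ r + t - 1 := by
    have h := dvd_sub hjd htd
    have e : (j * r - 1) - ((j - 1) * r - t) = r + t - 1 := by ring
    rwa [e] at h
  have h6 : a ≤ r + t - 1 := Int.le_of_dvd (by omega) h5
  -- now a - r ∈ [1, n-2], get i with (i+1)*r ≡ 0
  obtain ⟨i, hi1, hi2, hid⟩ := hF2 (a - r) (by omega) (by omega)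
  have h7 : a ∣ (i + 1) * r := by
    have h : a ∣ (i * r - (a - r)) + a := dvd_add hid dvd_rfl
    have e : (i * r - (a - r)) + a = (i + 1) * r := by ring
    rwa [e] at h
  have h8 : a ∣ (i + 1) * r * j := h7.mul_right j
  have h9 : a ∣ (i + 1) * (j * r - 1) := hjd.mul_left (i + 1)
  have h10 : a ∣ i + 1 := by
    have h := dvd_sub h8 h9
    have e : (i + 1) * r * j - (i + 1) * (j * r - 1) = i + 1 := by ring
    rwa [e] at h
  have := Int.le_of_dvd (by omega) h10
  omega
end

section
/- Let H be a numerical semigroup with at least 3 minimal generators. If there exist integers h ≥ 0 and α > 0 such that PF(H) = {h + α, h + 2α, ..., h + (n-1)α} where n ≥ 3 is the number of minimal generators, then h ∈ H and α ∉ H. -/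
/-- A numerical semigroup, viewed as a set of integers: it contains 0, is closed under
addition, consists of nonnegative integers, and has finite complement in ℕ. -/
def IsNumericalSemigroup (H : Set ℤ) : Prop :=
  0 ∈ H ∧ (∀ x ∈ H, ∀ y ∈ H, x + y ∈ H) ∧ (∀ x ∈ H, 0 ≤ x) ∧
    {z : ℤ | 0 ≤ z ∧ z ∉ H}.Finite

/-- The set of pseudo-Frobenius numbers of `H`. -/
def PF (H : Set ℤ) : Set ℤ :=
  {f : ℤ | f ∉ H ∧ ∀ s ∈ H, s ≠ 0 → f + s ∈ H}

/-- The Apéry set of `H` with respect to `h`. -/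
def Ap (H : Set ℤ) (h : ℤ) : Set ℤ := {x ∈ H | x - h ∉ H}

/-- The set of minimal generators of `H`: nonzero elements that are not a sum of two
nonzero elements of `H`. -/
def MinGens (H : Set ℤ) : Set ℤ :=
  {x ∈ H | x ≠ 0 ∧ ¬ ∃ y ∈ H, ∃ z ∈ H, y ≠ 0 ∧ z ≠ 0 ∧ y + z = x}

theorem stmt1 (H : Set ℤ) (hH : IsNumericalSemigroup H) (n : ℕ) (hn : 3 ≤ n)
    (hedim : (MinGens H).ncard = n) (h α : ℤ) (hh : 0 ≤ h) (hα : 0 < α)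
    (hPF : PF H = {x | ∃ i : ℕ, 1 ≤ i ∧ i ≤ n - 1 ∧ x = h + (i : ℤ) * α}) :
    h ∈ H ∧ α ∉ H := by
  obtain ⟨h0, hadd, hpos, hfin⟩ := hH
  -- PF elements are not in H
  have hPFnot : ∀ x ∈ PF H, x ∉ H := fun x hx => hx.1
  have hmemPF : ∀ i : ℕ, 1 ≤ i → i ≤ n - 1 → h + (i : ℤ) * α ∈ PF H := by
    intro i h1 h2
    rw [hPF]; exact ⟨i, h1, h2, rfl⟩
  -- α ∉ H
  have hαH : α ∉ H := by
    intro hαin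
    have h1 : h + (1 : ℕ) * α ∈ PF H := hmemPF 1 le_rfl (by omega)
    have h2 : h + (2 : ℕ) * α ∈ PF H := hmemPF 2 (by omega) (by omega)
    have : h + (1 : ℕ) * α + α ∈ H := h1.2 α hαin (by positivity)
    apply h2.1
    have : h + (2 : ℕ) * α = h + (1 : ℕ) * α + α := by push_cast; ring
    rw [this]
    exact ‹h + (1 : ℕ) * α + α ∈ H›
  refine ⟨?_, hαH⟩
  -- the set of gaps y with y - α ∈ H
  set S : Set ℤ := {y | y ∉ H ∧ y - α ∈ H} with hS
  have hSsub : S ⊆ {z : ℤ | 0 ≤ z ∧ z ∉ H} := by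
    intro y hy
    exact ⟨by have := hpos _ hy.2; linarith, hy.1⟩
  have hSfin : S.Finite := hfin.subset hSsub
  have hSne : S.Nonempty := ⟨α, hαH, by simpa using h0⟩
  obtain ⟨f, hfS, hfmax⟩ : ∃ a ∈ S, ∀ a' ∈ S, id a ≤ id a' → id a = id a' := by
    obtain ⟨a, ha, hmax⟩ := Set.exists_max_image S id hSfin hSne
    exact ⟨a, ha, fun a' ha' hle => le_antisymm hle (hmax a' ha')⟩
  -- f is a pseudo-Frobenius number
  have hfPF : f ∈ PF H := by
    refine ⟨hfS.1, fun s hs hs0 => ?_⟩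
    by_contra hfs
    have hfsS : f + s ∈ S := ⟨hfs, by
      have : f + s - α = (f - α) + s := by ring
      rw [this]; exact hadd _ hfS.2 _ hs⟩
    have hsle : 0 < s := lt_of_le_of_ne (hpos _ hs) (Ne.symm hs0)
    have := hfmax (f + s) hfsS (by simp; linarith)
    simp at this; omega
  rw [hPF] at hfPF
  obtain ⟨i, h1, h2, hfi⟩ := hfPF
  have hfα : f - α ∈ H := hfS.2
  rw [hfi] at hfα
  rcases eq_or_lt_of_le h1 with hi1 | hi2
  · -- i = 1
    have : h + (i : ℤ) * α - α = h := by rw [← hi1]; push_cast; ring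
    rwa [this] at hfα
  · -- i ≥ 2 : contradiction
    exfalso
    have hmem : h + ((i - 1 : ℕ) : ℤ) * α ∈ PF H := hmemPF (i - 1) (by omega) (by omega)
    apply hmem.1
    have : h + ((i - 1 : ℕ) : ℤ) * α = h + (i : ℤ) * α - α := by
      have : ((i - 1 : ℕ) : ℤ) = (i : ℤ) - 1 := by omega
      rw [this]; ring
    rw [this]; exact hfα
end

section
/- Let H = ⟨a₁,...,aₙ⟩ be a numerical semigroup with embedding dimension n ≥ 3 and multiplicity a₁, and set ℓ = a₁ - n + 1 with ℓ = 2. Suppose k[H]/(t^{a₁}) is stretched and PF(H) = {h + α, h + 2α, ..., h + (n-1)α} for some h ≥ 0, α > 0. Then Ap(H, a₁) = {0, a₂, ..., aₙ} ∪ {2a_λ} for some 2 ≤ λ ≤ n; i.e., the extra element of the Apéry set is twice a minimal generator. -/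
open Polynomial

/-- An Artinian local ring is stretched if the square of its maximal ideal is zero or
principal. For a commutative ring we ask this for every maximal ideal. -/
def Stretched (A : Type*) [CommRing A] : Prop :=
  ∀ I : Ideal A, I.IsMaximal → (I ^ 2 : Ideal A).IsPrincipal

/-- The numerical semigroup ring k[H] ⊆ k[t], for H generated by the aᵢ. -/
noncomputable def NSRing (k : Type*) [Field k] {n : ℕ} (a : Fin n → ℕ) :
    Subalgebra k (Polynomial k) :=
  Algebra.adjoin k (Set.range fun i => (X : Polynomial k) ^ a i)

/-- The element t^{a₀} of k[H]. -/
noncomputable def tMult (k : Type*) [Field k] {n : ℕ} [NeZero n] (a : Fin n → ℕ) :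
    NSRing k a :=
  ⟨(X : Polynomial k) ^ a 0, Algebra.subset_adjoin ⟨0, rfl⟩⟩

theorem stmt9 (k : Type*) [Field k] (n : ℕ) [NeZero n] (hn : 3 ≤ n) (a : Fin n → ℕ)
    (hpos : ∀ i, 0 < a i) (hinj : Function.Injective a)
    (hmult : ∀ i : Fin n, i ≠ 0 → a 0 < a i)
    (H : Set ℤ)
    (hH : H = (AddSubmonoid.closure (Set.range fun i => ((a i : ℤ))) : AddSubmonoid ℤ))
    (hfin : {z : ℤ | 0 ≤ z ∧ z ∉ H}.Finite)
    (hmin : MinGens H = Set.range fun i => ((a i : ℤ)))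
    (ℓ : ℕ) (hℓ : (ℓ : ℤ) = (a 0 : ℤ) - n + 1) (hℓ2 : ℓ = 2)
    (hstretched : Stretched ((NSRing k a) ⧸ (Ideal.span {tMult k a})))
    (h α : ℤ) (hh : 0 ≤ h) (hα : 0 < α)
    (hPF : PF H = {x : ℤ | ∃ i : ℕ, 1 ≤ i ∧ i ≤ n - 1 ∧ x = h + (i : ℤ) * α}) :
    ∃ lam : Fin n, lam ≠ 0 ∧
      Ap H (a 0) = insert (0 : ℤ) {x : ℤ | ∃ i : Fin n, i ≠ 0 ∧ x = (a i : ℤ)} ∪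
        {2 * (a lam : ℤ)} := by
  classical
  -- a 0 = n + 1
  have ha0n : a 0 = n + 1 := by
    rw [hℓ2] at hℓ; push_cast at hℓ; omega
  have ha0pos : (0:ℤ) < (a 0 : ℤ) := by exact_mod_cast hpos 0
  -- basic facts about H
  have h0 : (0:ℤ) ∈ H := by rw [hH]; exact (AddSubmonoid.closure _).zero_mem
  have hadd : ∀ x ∈ H, ∀ y ∈ H, x + y ∈ H := by
    intro x hx y hy; rw [hH] at *
    exact (AddSubmonoid.closure _).add_mem hx hy
  have haH : ∀ i : Fin n, ((a i : ℤ)) ∈ H := by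
    intro i; rw [hH]; exact AddSubmonoid.subset_closure ⟨i, rfl⟩
  have hnn : ∀ x ∈ H, 0 ≤ x := by
    intro x hx; rw [hH] at hx
    induction hx using AddSubmonoid.closure_induction with
    | mem y hy => obtain ⟨i, rfl⟩ := hy; positivity
    | zero => exact le_rfl
    | add x' y' hx' hy' px py => omega
  have hmul : ∀ m : ℕ, ((m : ℤ)) * (a 0 : ℤ) ∈ H := by
    intro m; induction m with
    | zero => simpa using h0
    | succ p ih =>
        have : ((p+1 : ℕ) : ℤ) * (a 0:ℤ) = (p:ℤ) * (a 0:ℤ) + (a 0:ℤ) := by push_cast; ring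
        rw [this]; exact hadd _ ih _ (haH 0)
  -- generators (≠ 0) and 0 are in the Apéry set
  have hApS : ∀ i : Fin n, i ≠ 0 → ((a i : ℤ)) ∈ Ap H (a 0) := by
    intro i hi
    refine ⟨haH i, fun hc => ?_⟩
    have hne : (a i : ℤ) - (a 0:ℤ) ≠ 0 := by
      have := hmult i hi; omega
    have hMG : (a i : ℤ) ∈ MinGens H := by rw [hmin]; exact ⟨i, rfl⟩
    exact hMG.2.2 ⟨(a 0 : ℤ), haH 0, (a i : ℤ) - (a 0:ℤ), hc, ha0pos.ne',
      hne, by ring⟩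
  have h0Ap : (0:ℤ) ∈ Ap H (a 0) := by
    refine ⟨h0, fun hc => ?_⟩
    have := hnn _ hc; omega
  -- fact 4: Apéry elements in the same residue class mod a 0 coincide
  have key : ∀ x ∈ Ap H (a 0), ∀ y ∈ Ap H (a 0), x ≤ y → (a 0:ℤ) ∣ y - x → x = y := by
    rintro x hx y hy hle ⟨c, hc⟩
    by_contra hne
    have hc1 : 1 ≤ c := by nlinarith [lt_of_le_of_ne hle hne]
    apply hy.2
    have he : y - (a 0:ℤ) = x + ((c - 1).toNat : ℤ) * (a 0:ℤ) := by
      rw [Int.toNat_of_nonneg (by omega)]; linarith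
    rw [he]; exact hadd _ hx.1 _ (hmul _)
  have fact4 : ∀ x ∈ Ap H (a 0), ∀ y ∈ Ap H (a 0), (a 0:ℤ) ∣ y - x → x = y := by
    intro x hx y hy hdvd
    rcases le_total x y with hle | hle
    · exact key x hx y hy hle hdvd
    · exact (key y hy x hx hle (dvd_sub_comm.mp hdvd)).symm
  -- fact 5: every residue class contains an Apéry element
  have fact5 : ∀ r : ℤ, ∃ x ∈ Ap H (a 0), (a 0:ℤ) ∣ x - r := by
    intro r
    obtain ⟨B, hB0, hB⟩ : ∃ B : ℤ, 0 ≤ B ∧ ∀ z, 0 ≤ z → z ∉ H → z ≤ B := by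
      obtain ⟨B', hB'⟩ := hfin.bddAbove
      exact ⟨max B' 0, le_max_right _ _,
        fun z hz hzH => le_trans (hB' ⟨hz, hzH⟩) (le_max_left _ _)⟩
    set kk := (B - r + 1).toNat with hkkdef
    have hkk : B - r + 1 ≤ (kk : ℤ) := Int.self_le_toNat _
    have hkk0 : (0:ℤ) ≤ (kk:ℤ) := Int.natCast_nonneg kk
    have hxB : B < r + (kk:ℤ) * (a 0:ℤ) := by nlinarith
    have hxH : r + (kk:ℤ) * (a 0:ℤ) ∈ H := by
      by_contra hc
      have := hB _ (by omega) hc; omega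
    obtain ⟨lb, ⟨hlbH, hlbd⟩, hlb⟩ :=
      Int.exists_least_of_bdd (P := fun z => z ∈ H ∧ (a 0:ℤ) ∣ z - r)
        ⟨0, fun z hz => hnn z hz.1⟩ ⟨r + (kk:ℤ) * (a 0:ℤ), hxH, ⟨kk, by ring⟩⟩
    refine ⟨lb, ⟨hlbH, fun hc => ?_⟩, hlbd⟩
    obtain ⟨c, hc'⟩ := hlbd
    have hle : lb ≤ lb - (a 0:ℤ) := hlb _ ⟨hc, ⟨c - 1, by linarith [mul_sub (a 0:ℤ) c 1]⟩⟩
    omega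
  -- residue map
  haveI : NeZero (a 0) := ⟨(hpos 0).ne'⟩
  have φinj : ∀ x ∈ Ap H (a 0), ∀ y ∈ Ap H (a 0),
      ((x : ZMod (a 0)) = (y : ZMod (a 0))) → x = y := by
    intro x hx y hy hxy
    exact fact4 x hx y hy ((ZMod.intCast_eq_intCast_iff _ _ _).mp hxy).dvd
  set SF : Finset ℤ :=
    insert 0 ((Finset.univ.filter (fun i : Fin n => i ≠ 0)).image (fun i => ((a i : ℤ))))
    with hSFdef
  have hSFAp : ∀ x ∈ SF, x ∈ Ap H (a 0) := by
    intro x hx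
    rcases Finset.mem_insert.mp hx with rfl | hx
    · exact h0Ap
    · obtain ⟨i, hi, rfl⟩ := Finset.mem_image.mp hx
      exact hApS i (by simpa using hi)
  have hSFcard : SF.card = n := by
    rw [hSFdef, Finset.card_insert_of_notMem, Finset.card_image_of_injOn]
    · rw [Finset.filter_ne', Finset.card_erase_of_mem (Finset.mem_univ _),
        Finset.card_univ, Fintype.card_fin]
      omega
    · intro i _ j _ hij
      exact hinj (Nat.cast_injective hij)
    · intro hc
      obtain ⟨i, _, hi⟩ := Finset.mem_image.mp hc
      have := hpos i; omega
  set Sφ : Finset (ZMod (a 0)) := SF.image (fun x : ℤ => (x : ZMod (a 0))) with hSφdef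
  have hSφcard : Sφ.card = n := by
    rw [hSφdef, Finset.card_image_of_injOn, hSFcard]
    intro x hx y hy hxy
    exact φinj x (hSFAp x hx) y (hSFAp y hy) hxy
  have hcardZ : Fintype.card (ZMod (a 0)) = n + 1 := by rw [ZMod.card, ha0n]
  obtain ⟨msg, hmsg⟩ : ∃ m : ZMod (a 0), m ∉ Sφ := by
    by_contra hc
    push_neg at hc
    have hle : (Finset.univ : Finset (ZMod (a 0))).card ≤ Sφ.card :=
      Finset.card_le_card (fun x _ => hc x)
    rw [Finset.card_univ, hcardZ, hSφcard] at hle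
    omega
  obtain ⟨w, hwAp, hwdvd⟩ := fact5 ((msg.val : ℤ))
  have hφw : ((w : ZMod (a 0))) = msg := by
    have h1 : ((msg.val : ℤ) : ZMod (a 0)) = (w : ZMod (a 0)) :=
      (ZMod.intCast_eq_intCast_iff _ _ _).mpr (Int.modEq_iff_dvd.mpr hwdvd)
    rw [← h1]; push_cast; simp [ZMod.natCast_val, ZMod.cast_id]
  have hwSF : w ∉ SF := by
    intro hc
    exact hmsg (hφw ▸ Finset.mem_image.mpr ⟨w, hc, rfl⟩)
  -- the Apéry set is SF ∪ {w}
  have hApsub : ∀ x ∈ Ap H (a 0), x ∈ SF ∨ x = w := by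
    intro x hx
    by_cases hc : ((x : ZMod (a 0))) ∈ Sφ
    · obtain ⟨s, hs, hsx⟩ := Finset.mem_image.mp hc
      left
      exact (φinj s (hSFAp s hs) x hx hsx) ▸ hs
    · right
      have hcompl : (Sφᶜ).card = 1 := by
        rw [Finset.card_compl, hSφcard, hcardZ]; omega
      obtain ⟨e, he⟩ := Finset.card_eq_one.mp hcompl
      have h1 : ((x : ZMod (a 0))) ∈ Sφᶜ := Finset.mem_compl.mpr hc
      have h2 : msg ∈ Sφᶜ := Finset.mem_compl.mpr hmsg
      rw [he, Finset.mem_singleton] at h1 h2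
      exact φinj x hx w hwAp (by rw [h1, hφw, h2])
  have hwne0 : w ≠ 0 := fun hc => hwSF (hc ▸ Finset.mem_insert_self _ _)
  -- w is not a minimal generator; decompose it
  have hwdec : ∃ y ∈ H, ∃ z ∈ H, y ≠ 0 ∧ z ≠ 0 ∧ y + z = w := by
    have hw1 : w ∉ MinGens H := by
      rw [hmin]
      rintro ⟨i, rfl⟩
      by_cases hi : i = 0
      · subst hi
        exact hwAp.2 (by simpa using h0)
      · exact hwSF (Finset.mem_insert_of_mem
          (Finset.mem_image.mpr ⟨i, by simp [hi], rfl⟩))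
    rcases Classical.em (∃ y ∈ H, ∃ z ∈ H, y ≠ 0 ∧ z ≠ 0 ∧ y + z = w) with hd | hd
    · exact hd
    · exact absurd ⟨hwAp.1, hwne0, hd⟩ hw1
  obtain ⟨y, hyH, z, hzH, hy0, hz0, hyz⟩ := hwdec
  have hyAp : y ∈ Ap H (a 0) := by
    refine ⟨hyH, fun hc => hwAp.2 ?_⟩
    have he : w - (a 0:ℤ) = (y - (a 0:ℤ)) + z := by rw [← hyz]; ring
    rw [he]; exact hadd _ hc _ hzH
  have hzAp : z ∈ Ap H (a 0) := by
    refine ⟨hzH, fun hc => hwAp.2 ?_⟩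
    have he : w - (a 0:ℤ) = y + (z - (a 0:ℤ)) := by rw [← hyz]; ring
    rw [he]; exact hadd _ hyH _ hc
  have hyw : y ≠ w := by
    intro hc
    have hz' : z = 0 := by omega
    exact hz0 hz'
  have hzw : z ≠ w := by
    intro hc
    have hy' : y = 0 := by omega
    exact hy0 hy'
  have hygen : ∃ i : Fin n, i ≠ 0 ∧ y = (a i : ℤ) := by
    rcases hApsub y hyAp with hS | hc
    · rcases Finset.mem_insert.mp hS with rfl | hS'
      · exact absurd rfl hy0
      · obtain ⟨i, hi, he⟩ := Finset.mem_image.mp hS'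
        exact ⟨i, by simpa using hi, he.symm⟩
    · exact absurd hc hyw
  have hzgen : ∃ j : Fin n, j ≠ 0 ∧ z = (a j : ℤ) := by
    rcases hApsub z hzAp with hS | hc
    · rcases Finset.mem_insert.mp hS with rfl | hS'
      · exact absurd rfl hz0
      · obtain ⟨j, hj, he⟩ := Finset.mem_image.mp hS'
        exact ⟨j, by simpa using hj, he.symm⟩
    · exact absurd hc hzw
  obtain ⟨i, hi0, rfl⟩ := hygen
  obtain ⟨j, hj0, rfl⟩ := hzgen
  -- PF counting forces i = j
  have hij : i = j := by
    by_contra hij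
    -- target finset
    set TF : Finset ℤ :=
      ((Finset.univ.filter (fun p : Fin n => p ≠ 0 ∧ p ≠ i ∧ p ≠ j)).image
        (fun p => ((a p : ℤ)))) ∪ {w} with hTFdef
    have hTFcard : TF.card ≤ n - 2 := by
      have h1 : (Finset.univ.filter (fun p : Fin n => p ≠ 0 ∧ p ≠ i ∧ p ≠ j))
          = ({0, i, j} : Finset (Fin n))ᶜ := by
        ext p
        simp [Finset.mem_compl, not_or, and_assoc]
      have h2 : ({0, i, j} : Finset (Fin n)).card = 3 := by
        rw [Finset.card_insert_of_notMem (by simp [Ne.symm hi0, Ne.symm hj0]),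
          Finset.card_insert_of_notMem (by simp [hij]), Finset.card_singleton]
      have h3 : (({0, i, j} : Finset (Fin n))ᶜ).card = n - 3 := by
        rw [Finset.card_compl, h2, Fintype.card_fin]
      calc TF.card ≤ _ + ({w} : Finset ℤ).card := Finset.card_union_le _ _
        _ ≤ (n - 3) + 1 := by
            gcongr
            · exact (Finset.card_image_le).trans (by rw [h1, h3])
            · simp
        _ ≤ n - 2 := by omega
    -- the image of PF + a 0
    have hgmem : ∀ m ∈ Finset.Icc 1 (n-1), (h + (m:ℤ) * α + (a 0:ℤ)) ∈ TF := by
      intro m hm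
      simp only [Finset.mem_Icc] at hm
      have hfPF : (h + (m:ℤ) * α) ∈ PF H := by
        rw [hPF]; exact ⟨m, hm.1, hm.2, rfl⟩
      obtain ⟨hfH, hfadd⟩ := hfPF
      have hgH : h + (m:ℤ) * α + (a 0:ℤ) ∈ H := hfadd _ (haH 0) ha0pos.ne'
      have hgAp : h + (m:ℤ) * α + (a 0:ℤ) ∈ Ap H (a 0) := by
        refine ⟨hgH, fun hc => hfH ?_⟩
        have he : h + (m:ℤ) * α + (a 0:ℤ) - (a 0:ℤ) = h + (m:ℤ) * α := by ring
        rwa [he] at hc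
      have hm1 : (1:ℤ) ≤ (m:ℤ) := by exact_mod_cast hm.1
      have hg0 : h + (m:ℤ) * α + (a 0:ℤ) ≠ 0 := by nlinarith
      have hgni : h + (m:ℤ) * α + (a 0:ℤ) ≠ (a i : ℤ) := by
        intro e
        have h1 : (h + (m:ℤ) * α) + (a j:ℤ) ∈ H := hfadd _ (haH j) (by
          have := hpos j; omega)
        have h2 : (h + (m:ℤ) * α) + (a j:ℤ) = w - (a 0:ℤ) := by
          rw [← hyz]; linarith
        exact hwAp.2 (h2 ▸ h1)
      have hgnj : h + (m:ℤ) * α + (a 0:ℤ) ≠ (a j : ℤ) := by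
        intro e
        have h1 : (h + (m:ℤ) * α) + (a i:ℤ) ∈ H := hfadd _ (haH i) (by
          have := hpos i; omega)
        have h2 : (h + (m:ℤ) * α) + (a i:ℤ) = w - (a 0:ℤ) := by
          rw [← hyz]; linarith
        exact hwAp.2 (h2 ▸ h1)
      rcases hApsub _ hgAp with hS | hw
      · rcases Finset.mem_insert.mp hS with e | hS'
        · exact absurd e hg0
        · obtain ⟨p, hp, he⟩ := Finset.mem_image.mp hS'
          refine Finset.mem_union_left _ (Finset.mem_image.mpr ⟨p, ?_, he⟩)
          simp only [Finset.mem_filter, Finset.mem_univ, true_and] at hp ⊢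
          refine ⟨hp, ?_, ?_⟩
          · rintro rfl; exact hgni he.symm
          · rintro rfl; exact hgnj he.symm
      · exact Finset.mem_union_right _ (by simp [hw])
    have hGsub : ((Finset.Icc 1 (n-1)).image (fun m : ℕ => h + (m:ℤ) * α + (a 0:ℤ))) ⊆ TF := by
      intro x hx
      obtain ⟨m, hm, rfl⟩ := Finset.mem_image.mp hx
      exact hgmem m hm
    have hGcard : ((Finset.Icc 1 (n-1)).image
        (fun m : ℕ => h + (m:ℤ) * α + (a 0:ℤ))).card = n - 1 := by
      rw [Finset.card_image_of_injOn, Nat.card_Icc]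
      · omega
      · intro m _ m' _ e
        have e' : h + (m:ℤ) * α + (a 0:ℤ) = h + (m':ℤ) * α + (a 0:ℤ) := e
        have : (m:ℤ) * α = (m':ℤ) * α := by linarith
        have : (m:ℤ) = (m':ℤ) := mul_right_cancel₀ hα.ne' this
        exact_mod_cast this
    have := Finset.card_le_card hGsub
    rw [hGcard] at this
    omega
  subst hij
  -- conclude
  refine ⟨i, hi0, ?_⟩
  have hw2 : w = 2 * (a i : ℤ) := by rw [← hyz]; ring
  ext x
  simp only [Set.mem_union, Set.mem_insert_iff, Set.mem_setOf_eq, Set.mem_singleton_iff]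
  constructor
  · intro hx
    rcases hApsub x hx with hS | rfl
    · rcases Finset.mem_insert.mp hS with rfl | hS'
      · exact Or.inl (Or.inl rfl)
      · obtain ⟨p, hp, rfl⟩ := Finset.mem_image.mp hS'
        exact Or.inl (Or.inr ⟨p, by simpa using hp, rfl⟩)
    · exact Or.inr hw2
  · rintro ((rfl | ⟨p, hp, rfl⟩) | rfl)
    · exact h0Ap
    · exact hApS p hp
    · exact hw2 ▸ hwAp
end

section
/- Let ℓ ≥ 2, n ≥ 3, a = ℓ + n - 1, and let b be a positive integer. Suppose H is a numerical semigroup with multiplicity a and embedding dimension n whose Apéry set Ap(H, a) equals {0, b, 2b, ..., ℓb} ∪ {ℓb + α, ℓb + 2α, ..., ℓb + (n-2)α} for some α > 0 (with these ℓ + n - 1 = a elements forming a complete system of representatives modulo a). Then gcd(a, b) = 1 implies α ≡ b (mod a). -/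
lemma cast_nat_inj {a : ℕ} [NeZero a] {i j : ℕ} (hi : i < a) (hj : j < a)
    (h : (i : ZMod a) = (j : ZMod a)) : i = j := by
  have := congrArg ZMod.val h
  rwa [ZMod.val_cast_of_lt hi, ZMod.val_cast_of_lt hj] at this

lemma core_lemma (a ℓ m : ℕ) (hℓ : 2 ≤ ℓ) (hm : 1 ≤ m) (ha : a = ℓ + m + 1)
    (c : ZMod a)
    (h : (Finset.Icc 1 m).image (fun i : ℕ => (i : ZMod a) * c)
        = (Finset.Icc 1 m).image (fun i : ℕ => (i : ZMod a))) :
    c = 1 := by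
  haveI : NeZero a := ⟨by omega⟩
  have hc : c ∈ (Finset.Icc 1 m).image (fun i : ℕ => (i : ZMod a)) := by
    rw [← h]
    exact Finset.mem_image.2 ⟨1, Finset.mem_Icc.2 ⟨le_refl 1, hm⟩, by simp⟩
  obtain ⟨d, hd, hcd⟩ := Finset.mem_image.1 hc
  rw [Finset.mem_Icc] at hd
  by_cases hd1 : d = 1
  · rw [← hcd, hd1, Nat.cast_one]
  have hd2 : 2 ≤ d := by omega
  have key : ∀ j : ℕ, 1 ≤ j → j ≤ m → m + 1 ≤ j + d → j + d ≤ m + 2 →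
      (j : ZMod a) = (m : ZMod a) * c := by
    intro j hj1 hjm hjd1 hjd2
    have hjmem : (j : ZMod a) ∈ (Finset.Icc 1 m).image (fun i : ℕ => (i : ZMod a) * c) := by
      rw [h]; exact Finset.mem_image.2 ⟨j, Finset.mem_Icc.2 ⟨hj1, hjm⟩, rfl⟩
    obtain ⟨i, hi, hic⟩ := Finset.mem_image.1 hjmem
    rw [Finset.mem_Icc] at hi
    rcases eq_or_lt_of_le hi.2 with heq | hlt'
    · subst heq; exact hic.symm
    · exfalso
      have hmem2 : ((i + 1 : ℕ) : ZMod a) * c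
          ∈ (Finset.Icc 1 m).image (fun i : ℕ => (i : ZMod a)) := by
        rw [← h]
        exact Finset.mem_image.2 ⟨i + 1, Finset.mem_Icc.2 ⟨by omega, by omega⟩, rfl⟩
      obtain ⟨j', hj', hj'c⟩ := Finset.mem_image.1 hmem2
      rw [Finset.mem_Icc] at hj'
      have hcomp : ((i + 1 : ℕ) : ZMod a) * c = ((j + d : ℕ) : ZMod a) := by
        push_cast
        rw [add_mul, hic, one_mul, ← hcd]
      have : j' = j + d := cast_nat_inj (a := a) (i := j') (j := j + d) (by omega) (by omega) (by rw [hj'c, hcomp])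
      omega
  have h1 : ((m + 1 - d : ℕ) : ZMod a) = (m : ZMod a) * c :=
    key _ (by omega) (by omega) (by omega) (by omega)
  have h2 : ((m + 2 - d : ℕ) : ZMod a) = (m : ZMod a) * c :=
    key _ (by omega) (by omega) (by omega) (by omega)
  have := cast_nat_inj (a := a) (i := m + 1 - d) (j := m + 2 - d) (by omega) (by omega)
    (by rw [h1, h2])
  omega

lemma add_mul_mem {H : Set ℤ} (hH : IsNumericalSemigroup H) {x u : ℤ} (hx : x ∈ H)
    (hu : u ∈ H) : ∀ k : ℕ, x + k * u ∈ H := by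
  intro k
  induction k with
  | zero => simpa using hx
  | succ k ih =>
      have := hH.2.1 _ ih _ hu
      have heq : x + (k + 1 : ℕ) * u = x + k * u + u := by push_cast; ring
      rwa [heq]

lemma ap_inj {H : Set ℤ} (hH : IsNumericalSemigroup H) {u : ℤ} (hu : u ∈ H) (hupos : 0 < u) :
    ∀ x ∈ Ap H u, ∀ y ∈ Ap H u, x ≡ y [ZMOD u] → x = y := by
  have main : ∀ x ∈ Ap H u, ∀ y ∈ Ap H u, x ≤ y → x ≡ y [ZMOD u] → x = y := by
    intro x hx y hy hxy hmod
    have hdvd : u ∣ y - x := Int.ModEq.dvd hmod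
    obtain ⟨k, hk⟩ := hdvd
    have hk0 : 0 ≤ k := by nlinarith
    rcases eq_or_lt_of_le hk0 with h0 | hpos
    · rw [← h0, mul_zero] at hk; omega
    · exfalso
      obtain ⟨k', rfl⟩ : ∃ k' : ℕ, k = (k' : ℤ) + 1 := ⟨(k - 1).toNat, by omega⟩
      have : x + k' * u ∈ H := add_mul_mem hH hx.1 hu k'
      have hy2 : y - u ∈ H := by
        have heq : y - u = x + k' * u := by linarith [hk]
        rwa [heq]
      exact hy.2 hy2
  intro x hx y hy hmod
  rcases le_total x y with h | h
  · exact main x hx y hy h hmod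
  · exact (main y hy x hx h hmod.symm).symm

lemma ap_surj {H : Set ℤ} (hH : IsNumericalSemigroup H) {u : ℤ} (hu : u ∈ H) (hupos : 0 < u)
    (z : ℤ) : ∃ x ∈ Ap H u, x ≡ z [ZMOD u] := by
  classical
  obtain ⟨M, hM⟩ := hH.2.2.2.bddAbove
  rw [mem_upperBounds] at *
  have hbig : ∀ w : ℤ, 0 ≤ w → M < w → w ∈ H := by
    intro w hw0 hwM
    by_contra hw
    exact absurd (hM w ⟨hw0, hw⟩) (by omega)
  set w₀ : ℤ := z % u + u * (M.toNat + 1) with hw₀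
  have hw₀mem : w₀ ∈ H := by
    apply hbig
    · have := Int.emod_nonneg z (by omega : u ≠ 0)
      positivity
    · have h1 : (M.toNat : ℤ) + 1 ≤ u * (M.toNat + 1) := by
        nlinarith [Int.natCast_nonneg M.toNat]
      have h2 : M ≤ (M.toNat : ℤ) := Int.self_le_toNat M
      have := Int.emod_nonneg z (by omega : u ≠ 0)
      omega
  have hw₀mod : w₀ ≡ z [ZMOD u] := by
    have : w₀ % u = z % u % u := by
      rw [hw₀]; rw [Int.add_mul_emod_self_left]
    simpa [Int.ModEq, Int.emod_emod_of_dvd] using this.trans (Int.emod_emod_of_dvd z dvd_rfl)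
  have hex : ∃ k : ℕ, (k : ℤ) ∈ H ∧ (k : ℤ) ≡ z [ZMOD u] := by
    refine ⟨w₀.toNat, ?_, ?_⟩
    · rwa [Int.toNat_of_nonneg (hH.2.2.1 _ hw₀mem)]
    · rwa [Int.toNat_of_nonneg (hH.2.2.1 _ hw₀mem)]
  let k₀ := Nat.find hex
  obtain ⟨hk₀H, hk₀mod⟩ := Nat.find_spec hex
  refine ⟨(k₀ : ℤ), ⟨hk₀H, ?_⟩, hk₀mod⟩
  intro hcon
  have hnn : 0 ≤ (k₀ : ℤ) - u := hH.2.2.1 _ hcon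
  have hmem : (((k₀ : ℤ) - u).toNat : ℤ) ∈ H ∧ (((k₀ : ℤ) - u).toNat : ℤ) ≡ z [ZMOD u] := by
    rw [Int.toNat_of_nonneg hnn]
    have hz : ((k₀ : ℤ) - u) ≡ z - 0 [ZMOD u] :=
      Int.ModEq.sub hk₀mod (Int.modEq_zero_iff_dvd.2 dvd_rfl)
    exact ⟨hcon, by simpa using hz⟩
  have := Nat.find_min' hex hmem
  omega

theorem stmt10 (ℓ n : ℕ) (hℓ : 2 ≤ ℓ) (hn : 3 ≤ n) (a : ℕ) (ha : a = ℓ + n - 1)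
    (b : ℤ) (hb : 0 < b) (α : ℤ) (hα : 0 < α)
    (H : Set ℤ) (hH : IsNumericalSemigroup H)
    (hmult : IsLeast {x ∈ H | x ≠ 0} (a : ℤ))
    (hedim : (MinGens H).ncard = n)
    (hAp : Ap H a = {x : ℤ | ∃ i : ℕ, i ≤ ℓ ∧ x = (i : ℤ) * b} ∪
        {x : ℤ | ∃ i : ℕ, 1 ≤ i ∧ i ≤ n - 2 ∧ x = (ℓ : ℤ) * b + (i : ℤ) * α}) :
    Int.gcd (a : ℤ) b = 1 → α ≡ b [ZMOD (a : ℤ)] := by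
  intro hg
  obtain ⟨haH, hane⟩ := hmult.1
  set m := n - 2 with hm
  have hm1 : 1 ≤ m := by omega
  have ham : a = ℓ + m + 1 := by omega
  haveI : NeZero a := ⟨by omega⟩
  have hapos : (0 : ℤ) < (a : ℤ) := by exact_mod_cast (by omega : 0 < a)
  -- Apéry membership facts
  have hmemP : ∀ i : ℕ, i ≤ ℓ → ((i : ℤ) * b) ∈ Ap H (a : ℤ) := by
    intro i hi; rw [hAp]; exact Or.inl ⟨i, hi, rfl⟩
  have hmemQ : ∀ i : ℕ, 1 ≤ i → i ≤ m → ((ℓ : ℤ) * b + (i : ℤ) * α) ∈ Ap H (a : ℤ) := by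
    intro i h1 h2; rw [hAp]; exact Or.inr ⟨i, h1, by omega, rfl⟩
  have hceq : ∀ x y : ℤ, x ∈ Ap H (a : ℤ) → y ∈ Ap H (a : ℤ) →
      ((x : ZMod a) = (y : ZMod a)) → x = y := by
    intro x y hx hy hxy
    exact ap_inj hH haH hapos x hx y hy ((ZMod.intCast_eq_intCast_iff x y a).1 hxy)
  -- b is a unit mod a
  have hcop : Nat.Coprime b.natAbs a := by
    have h0 : Nat.gcd ((a : ℤ)).natAbs b.natAbs = 1 := hg
    rw [Int.natAbs_natCast] at h0
    exact Nat.coprime_comm.mp h0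
  have hbz : ((b : ZMod a)) = ((b.natAbs : ℕ) : ZMod a) := by
    conv_lhs => rw [← Int.natAbs_of_nonneg hb.le]
    exact Int.cast_natCast b.natAbs
  have hu : IsUnit ((b : ZMod a)) := by
    rw [hbz]; exact (ZMod.isUnit_iff_coprime b.natAbs a).2 hcop
  obtain ⟨v, hv⟩ := hu
  set uu : ZMod a := ((v⁻¹ : (ZMod a)ˣ) : ZMod a) with huu
  have hbu : (b : ZMod a) * uu = 1 := by rw [← hv, huu]; exact v.mul_inv
  have hub : uu * (b : ZMod a) = 1 := by rw [← hv, huu]; exact v.inv_mul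
  -- the three finsets
  set P : Finset (ZMod a) :=
    (Finset.range (ℓ + 1)).image (fun i : ℕ => ((i * b : ℤ) : ZMod a)) with hP
  set Q : Finset (ZMod a) :=
    (Finset.Icc 1 m).image (fun i : ℕ => (((ℓ : ℤ) * b + i * α : ℤ) : ZMod a)) with hQ
  set Q' : Finset (ZMod a) :=
    (Finset.Icc 1 m).image (fun i : ℕ => (((ℓ : ℤ) * b + i * b : ℤ) : ZMod a)) with hQ'
  -- P and Q are disjoint
  have hPQdisj : Disjoint P Q := by
    rw [Finset.disjoint_left]
    rintro z hzP hzQ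
    obtain ⟨i, hi, hiz⟩ := Finset.mem_image.1 hzP
    obtain ⟨j, hj, hjz⟩ := Finset.mem_image.1 hzQ
    rw [Finset.mem_range] at hi
    rw [Finset.mem_Icc] at hj
    have heq : (i : ℤ) * b = (ℓ : ℤ) * b + (j : ℤ) * α :=
      hceq _ _ (hmemP i (by omega)) (hmemQ j hj.1 hj.2) (by rw [hiz, hjz])
    have h1 : (i : ℤ) * b ≤ (ℓ : ℤ) * b := by
      have : (i : ℤ) ≤ (ℓ : ℤ) := by exact_mod_cast (by omega : i ≤ ℓ)
      exact mul_le_mul_of_nonneg_right this hb.le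
    have h2 : 0 < (j : ℤ) * α := by
      have : (0 : ℤ) < (j : ℤ) := by exact_mod_cast hj.1
      exact mul_pos this hα
    linarith
  -- P ∪ Q = univ
  have hPQu : P ∪ Q = Finset.univ := by
    apply Finset.eq_univ_of_forall
    intro z
    obtain ⟨x, hxAp, hxz⟩ := ap_surj hH haH hapos ((z.val : ℕ) : ℤ)
    have hxcast : ((x : ZMod a)) = z := by
      have h1 : ((x : ZMod a)) = (((z.val : ℕ) : ℤ) : ZMod a) :=
        (ZMod.intCast_eq_intCast_iff _ _ _).2 hxz
      rw [h1]
      push_cast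
      exact ZMod.natCast_rightInverse z
    have := hxAp
    rw [hAp] at this
    rcases this with ⟨i, hi, rfl⟩ | ⟨i, hi1, hi2, rfl⟩
    · exact Finset.mem_union.2 (Or.inl (Finset.mem_image.2
        ⟨i, Finset.mem_range.2 (by omega), hxcast⟩))
    · exact Finset.mem_union.2 (Or.inr (Finset.mem_image.2
        ⟨i, Finset.mem_Icc.2 ⟨hi1, by omega⟩, hxcast⟩))
  -- P and Q' are disjoint
  have hPQ'disj : Disjoint P Q' := by
    rw [Finset.disjoint_left]
    rintro z hzP hzQ
    obtain ⟨i, hi, hiz⟩ := Finset.mem_image.1 hzP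
    obtain ⟨j, hj, hjz⟩ := Finset.mem_image.1 hzQ
    rw [Finset.mem_range] at hi
    rw [Finset.mem_Icc] at hj
    have heq : ((i : ZMod a)) * (b : ZMod a) = (((ℓ + j : ℕ) : ZMod a)) * (b : ZMod a) := by
      have := hiz.trans hjz.symm
      push_cast at this ⊢
      rw [this]; ring
    have heq2 : ((i : ZMod a)) = (((ℓ + j : ℕ) : ZMod a)) := by
      have := congrArg (fun t => t * uu) heq
      simpa [mul_assoc, hbu] using this
    have : i = ℓ + j := cast_nat_inj (a := a) (i := i) (j := ℓ + j) (by omega) (by omega) heq2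
    omega
  -- P ∪ Q' = univ
  have hPQ'u : P ∪ Q' = Finset.univ := by
    apply Finset.eq_univ_of_forall
    intro z
    set w : ZMod a := z * uu with hw
    have hwb : w * (b : ZMod a) = z := by
      rw [hw, mul_assoc, hub, mul_one]
    have hwval : ((w.val : ℕ) : ZMod a) = w := ZMod.natCast_rightInverse w
    have hwlt : w.val < a := ZMod.val_lt w
    by_cases hcase : w.val ≤ ℓ
    · refine Finset.mem_union.2 (Or.inl (Finset.mem_image.2
        ⟨w.val, Finset.mem_range.2 (by omega), ?_⟩))
      push_cast
      rw [hwval, hwb]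
    · refine Finset.mem_union.2 (Or.inr (Finset.mem_image.2
        ⟨w.val - ℓ, Finset.mem_Icc.2 ⟨by omega, by omega⟩, ?_⟩))
      push_cast
      have hsplit : ((ℓ : ZMod a)) + ((w.val - ℓ : ℕ) : ZMod a) = ((w.val : ℕ) : ZMod a) := by
        rw [← Nat.cast_add]
        congr 1
        omega
      push_cast at hsplit
      calc ((ℓ : ZMod a)) * (b : ZMod a) + ((w.val - ℓ : ℕ) : ZMod a) * (b : ZMod a)
          = (((ℓ : ZMod a)) + ((w.val - ℓ : ℕ) : ZMod a)) * (b : ZMod a) := by push_cast; ring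
        _ = ((w.val : ℕ) : ZMod a) * (b : ZMod a) := by rw [← hsplit]
        _ = z := by rw [hwval, hwb]
  -- hence Q = Q'
  have hQQ' : Q = Q' := by
    have hQc : ∀ z, z ∈ Q ↔ z ∉ P := by
      intro z
      constructor
      · intro h hp
        exact Finset.disjoint_left.1 hPQdisj hp h
      · intro h
        rcases Finset.mem_union.1 (hPQu ▸ Finset.mem_univ z) with h' | h'
        · exact absurd h' h
        · exact h'
    have hQ'c : ∀ z, z ∈ Q' ↔ z ∉ P := by
      intro z
      constructor
      · intro h hp
        exact Finset.disjoint_left.1 hPQ'disj hp h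
      · intro h
        rcases Finset.mem_union.1 (hPQ'u ▸ Finset.mem_univ z) with h' | h'
        · exact absurd h' h
        · exact h'
    ext z
    rw [hQc, hQ'c]
  -- extract image equality for the core lemma
  set c : ZMod a := ((α : ZMod a)) * uu with hc
  set f : ZMod a → ZMod a := fun x => (x - ((ℓ : ZMod a)) * (b : ZMod a)) * uu with hf
  have himg := congrArg (Finset.image f) hQQ'
  rw [hQ, hQ', Finset.image_image, Finset.image_image] at himg
  have hL : (Finset.Icc 1 m).image (f ∘ fun i : ℕ => (((ℓ : ℤ) * b + i * α : ℤ) : ZMod a))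
      = (Finset.Icc 1 m).image (fun i : ℕ => (i : ZMod a) * c) := by
    apply Finset.image_congr
    intro i _
    simp only [Function.comp_apply, hf, hc]
    push_cast
    ring
  have hR : (Finset.Icc 1 m).image (f ∘ fun i : ℕ => (((ℓ : ℤ) * b + i * b : ℤ) : ZMod a))
      = (Finset.Icc 1 m).image (fun i : ℕ => (i : ZMod a)) := by
    apply Finset.image_congr
    intro i _
    simp only [Function.comp_apply, hf]
    push_cast
    calc (((ℓ : ZMod a)) * (b : ZMod a) + ((i : ZMod a)) * (b : ZMod a)
          - ((ℓ : ZMod a)) * (b : ZMod a)) * uu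
        = ((i : ZMod a)) * ((b : ZMod a) * uu) := by ring
      _ = (i : ZMod a) := by rw [hbu, mul_one]
  rw [hL, hR] at himg
  have hc1 : c = 1 := core_lemma a ℓ m hℓ hm1 ham c himg
  have hαb : ((α : ZMod a)) = ((b : ZMod a)) := by
    have : ((α : ZMod a)) * (uu * (b : ZMod a)) = ((b : ZMod a)) := by
      rw [← mul_assoc, ← hc, hc1, one_mul]
    rwa [hub, mul_one] at this
  exact (ZMod.intCast_eq_intCast_iff α b a).1 hαb
end

section
/- Let ℓ ≥ 2, n ≥ 3, a = ℓ + n - 1, and let a, b be coprime positive integers. If the set {0, b, 2b, ..., ℓb} ∪ {ℓb - α, ℓb - 2α, ..., ℓb - (n-2)α} is a complete system of representatives modulo a for some integer α, then b ≡ -α (mod a). -/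
lemma aux_natCast_inj {A x y : ℕ} (hx : x < A) (hy : y < A) (h : (x : ZMod A) = y) : x = y := by
  haveI : NeZero A := ⟨by omega⟩
  have := congrArg ZMod.val h
  rwa [ZMod.val_natCast_of_lt hx, ZMod.val_natCast_of_lt hy] at this


lemma aux_flip {A : ℕ} (L : ℕ) (hLA : L < A) (F : ℕ → ZMod A)
    (h : ∀ t, 1 ≤ t → t ≤ L → ∃ j, 1 ≤ j ∧ j ≤ L ∧ (t : ZMod A) = F j) :
    ∀ j, 1 ≤ j → j ≤ L → ∃ t, 1 ≤ t ∧ t ≤ L ∧ (t : ZMod A) = F j := by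
  classical
  set S := Finset.Icc 1 L with hS
  have hmem : ∀ t : ℕ, t ∈ S ↔ 1 ≤ t ∧ t ≤ L := by intro t; simp [hS]
  have hg : ∀ t : {x // x ∈ S}, ∃ j : {x // x ∈ S}, ((t : ℕ) : ZMod A) = F (j : ℕ) := by
    rintro ⟨t, ht⟩
    obtain ⟨j, hj1, hj2, hj3⟩ := h t ((hmem t).mp ht).1 ((hmem t).mp ht).2
    exact ⟨⟨j, (hmem j).mpr ⟨hj1, hj2⟩⟩, hj3⟩
  choose g hgspec using hg
  have hginj : Function.Injective g := by
    rintro ⟨t1, ht1⟩ ⟨t2, ht2⟩ hgt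
    have h1 := hgspec ⟨t1, ht1⟩
    have h2 := hgspec ⟨t2, ht2⟩
    rw [hgt] at h1
    have : t1 = t2 := by
      apply aux_natCast_inj (lt_of_le_of_lt ((hmem t1).mp ht1).2 hLA)
        (lt_of_le_of_lt ((hmem t2).mp ht2).2 hLA)
      rw [h1, h2]
    exact Subtype.ext this
  have hgsurj : Function.Surjective g := Finite.surjective_of_injective hginj
  intro j hj1 hj2
  obtain ⟨⟨t, ht⟩, hgt⟩ := hgsurj ⟨j, (hmem j).mpr ⟨hj1, hj2⟩⟩
  have := hgspec ⟨t, ht⟩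
  rw [hgt] at this
  exact ⟨t, ((hmem t).mp ht).1, ((hmem t).mp ht).2, this⟩

theorem stmt11 (ℓ n : ℕ) (hℓ : 2 ≤ ℓ) (hn : 3 ≤ n) (a : ℕ) (ha : a = ℓ + n - 1)
    (b : ℤ) (hb : 0 < b) (hcop : Int.gcd (a : ℤ) b = 1) (α : ℤ)
    (hcomp : ∀ z : ℤ, ∃! s, s ∈ ({x : ℤ | ∃ i : ℕ, i ≤ ℓ ∧ x = (i : ℤ) * b} ∪
        {x : ℤ | ∃ i : ℕ, 1 ≤ i ∧ i ≤ n - 2 ∧ x = (ℓ : ℤ) * b - (i : ℤ) * α}) ∧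
        s ≡ z [ZMOD (a : ℤ)]) :
    b ≡ -α [ZMOD (a : ℤ)] := by
  set m := n - 2 with hm
  have ham : a = ℓ + m + 1 := by omega
  have ha4 : 4 ≤ a := by omega
  have hsur : ∀ z : ZMod a, (∃ j : ℕ, j ≤ ℓ ∧ z = (j : ZMod a) * (b : ZMod a)) ∨
      (∃ i : ℕ, 1 ≤ i ∧ i ≤ m ∧ z = (ℓ : ZMod a) * (b : ZMod a) - (i : ZMod a) * (α : ZMod a)) := by
    intro z
    obtain ⟨w, rfl⟩ := ZMod.intCast_surjective z
    obtain ⟨s, ⟨hsmem, hsc⟩, _⟩ := hcomp w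
    have hcast : (s : ZMod a) = (w : ZMod a) := (ZMod.intCast_eq_intCast_iff _ _ _).mpr hsc
    rcases hsmem with h | h
    · obtain ⟨j, hj, rfl⟩ := h
      left; exact ⟨j, hj, by rw [← hcast]; push_cast; ring⟩
    · obtain ⟨i, hi1, hi2, rfl⟩ := h
      right; exact ⟨i, hi1, hi2, by rw [← hcast]; push_cast; ring⟩
  have hub : IsUnit (b : ZMod a) := by
    have hco : IsCoprime (a : ℤ) b := Int.isCoprime_iff_gcd_eq_one.mpr hcop
    obtain ⟨u, v, huv⟩ := hco
    have := congrArg (fun x : ℤ => (x : ZMod a)) huv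
    simp only [Int.cast_add, Int.cast_mul, Int.cast_one] at this
    have haz : ((a : ℤ) : ZMod a) = 0 := by push_cast; simp
    rw [haz, mul_zero, zero_add] at this
    exact IsUnit.of_mul_eq_one _ (by rw [mul_comm] at this; exact this)
  have hstep1 : ∃ i₀ : ℕ, 1 ≤ i₀ ∧ i₀ ≤ m ∧ (b : ZMod a) = -((i₀ : ZMod a) * (α : ZMod a)) := by
    rcases hsur ((((ℓ + 1 : ℕ) : ZMod a)) * b) with ⟨j, hj, hje⟩ | ⟨i, hi1, hi2, hie⟩
    · exfalso
      have := aux_natCast_inj (by omega) (by omega : j < a) (hub.mul_right_cancel hje)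
      omega
    · refine ⟨i, hi1, hi2, ?_⟩
      have h1 : ((ℓ + 1 : ℕ) : ZMod a) * b = (ℓ : ZMod a) * b - (i : ZMod a) * α := hie
      push_cast at h1
      linear_combination h1
  obtain ⟨i₀, hi₀1, hi₀2, hbα⟩ := hstep1
  have huα : IsUnit ((α : ZMod a)) := by
    have : IsUnit ((i₀ : ZMod a) * (α : ZMod a)) := by
      rw [hbα] at hub; exact (IsUnit.neg_iff _).mp hub
    exact isUnit_of_mul_isUnit_right this
  have hmside : ∀ k, 1 ≤ k → k ≤ m → ∃ i, 1 ≤ i ∧ i ≤ m ∧ ((i₀ * k : ℕ) : ZMod a) = (i : ZMod a) := by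
    intro k hk1 hk2
    rcases hsur ((((ℓ + k : ℕ) : ZMod a)) * b) with ⟨j, hj, hje⟩ | ⟨i, hi1, hi2, hie⟩
    · exfalso
      have := aux_natCast_inj (by omega) (by omega : j < a) (hub.mul_right_cancel hje)
      omega
    · refine ⟨i, hi1, hi2, ?_⟩
      have h1 : ((ℓ + k : ℕ) : ZMod a) * b = (ℓ : ZMod a) * b - (i : ZMod a) * α := hie
      push_cast at h1
      apply huα.mul_right_cancel
      push_cast
      linear_combination (k : ZMod a) * hbα - h1
  have hlsur : ∀ t, 1 ≤ t → t ≤ ℓ → ∃ j, 1 ≤ j ∧ j ≤ ℓ ∧ (t : ZMod a) = ((i₀ * j : ℕ) : ZMod a) := by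
    intro t ht1 ht2
    rcases hsur ((ℓ : ZMod a) * b + (t : ZMod a) * α) with ⟨j, hj, hje⟩ | ⟨i, hi1, hi2, hie⟩
    · by_cases hjl : j = ℓ
      · exfalso
        subst hjl
        have h0 : (t : ZMod a) * α = 0 := by linear_combination hje
        have ht0 : (t : ZMod a) = 0 := by
          apply huα.mul_right_cancel
          rw [h0, zero_mul]
        have := (ZMod.natCast_eq_zero_iff t a).mp ht0
        have := Nat.le_of_dvd (by omega) this
        omega
      · refine ⟨ℓ - j, by omega, by omega, ?_⟩
        apply huα.mul_right_cancel
        have hlj : ((ℓ - j : ℕ) : ZMod a) = (ℓ : ZMod a) - (j : ZMod a) := by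
          have : ((j + (ℓ - j) : ℕ) : ZMod a) = ((ℓ : ℕ) : ZMod a) := by congr 1; omega
          push_cast at this
          linear_combination this
        push_cast [hlj]
        linear_combination hje + ((j : ZMod a) - (ℓ : ZMod a)) * hbα
    · exfalso
      have h1 : (ℓ : ZMod a) * b + (t : ZMod a) * α = (ℓ : ZMod a) * b - (i : ZMod a) * α := hie
      have h0 : ((t + i : ℕ) : ZMod a) * α = 0 := by push_cast; linear_combination h1
      have hti : ((t + i : ℕ) : ZMod a) = 0 := by
        apply huα.mul_right_cancel
        rw [h0, zero_mul]
      have := (ZMod.natCast_eq_zero_iff _ a).mp hti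
      have := Nat.le_of_dvd (by omega) this
      omega
  have hlfwd : ∀ j, 1 ≤ j → j ≤ ℓ → ∃ t, 1 ≤ t ∧ t ≤ ℓ ∧ (t : ZMod a) = ((i₀ * j : ℕ) : ZMod a) :=
    aux_flip ℓ (by omega) (fun j => ((i₀ * j : ℕ) : ZMod a)) hlsur
  set r := min ℓ m with hr
  have hrfwd : ∀ k, 1 ≤ k → k ≤ r → ∃ t, 1 ≤ t ∧ t ≤ r ∧ ((i₀ * k : ℕ) : ZMod a) = (t : ZMod a) := by
    intro k hk1 hk2
    obtain ⟨i, hi1, hi2, hie⟩ := hmside k hk1 (by omega)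
    obtain ⟨t, ht1, ht2, hte⟩ := hlfwd k hk1 (by omega)
    have : i = t := aux_natCast_inj (show i < a by omega) (show t < a by omega)
      (by rw [← hie]; exact hte.symm)
    exact ⟨i, hi1, by omega, hie⟩
  have hind : ∀ k, 1 ≤ k → k ≤ r → i₀ * k ≤ r := by
    intro k
    induction k with
    | zero => omega
    | succ k ih =>
      intro _ hk2
      have he : i₀ * (k + 1) = i₀ * k + i₀ := by ring
      have hlt : i₀ * (k + 1) < a := by
        rcases Nat.eq_zero_or_pos k with rfl | hk
        · simp; omega
        · have h1 := ih hk (by omega)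
          have h2 : i₀ ≤ i₀ * k := Nat.le_mul_of_pos_right i₀ hk
          omega
      obtain ⟨t, ht1, ht2, hte⟩ := hrfwd (k + 1) (by omega) hk2
      have := aux_natCast_inj hlt (by omega : t < a) hte
      omega
  have hi₀r : i₀ * r ≤ r := hind r (by omega) le_rfl
  have hi₀ : i₀ = 1 := by
    have : i₀ ≤ 1 := Nat.le_of_mul_le_mul_right (by simpa using hi₀r) (by omega)
    omega
  rw [← ZMod.intCast_eq_intCast_iff]
  subst hi₀
  push_cast at hbα ⊢
  rw [hbα]
  ring
end

section
/- Let ℓ ≥ 2, n ≥ 3, α > 0, h₁ ≥ 0 be integers; set a = ℓ + n - 1 and b = (h₁+1)a + α, and assume gcd(a, α) = 1. Then H = ⟨a, b, ℓb + α, ℓb + 2α, ..., ℓb + (n-2)α⟩ is a numerical semigroup with multiplicity a, embedding dimension n, Apéry set Ap(H, a) = {0, b, 2b, ..., ℓb} ∪ {ℓb + α, ..., ℓb + (n-2)α}, and PF(H) forms an arithmetic sequence {h+α, h+2α, ..., h+(n-1)α} where h = h₁a + (ℓ-1)b. -/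
namespace NS12

def cc (ℓ : ℕ) (h₁ : ℤ) (i : ℕ) : ℤ := ((min i ℓ : ℕ) : ℤ) * (h₁ + 1)

def ee (ℓ a : ℕ) (h₁ α : ℤ) (i : ℕ) : ℤ := cc ℓ h₁ i * a + i * α

variable {ℓ a : ℕ} {h₁ α : ℤ}

lemma cc_nonneg (hh₁ : 0 ≤ h₁) (i : ℕ) : 0 ≤ cc ℓ h₁ i :=
  mul_nonneg (by positivity) (by linarith)

lemma cc_mono (hh₁ : 0 ≤ h₁) {i j : ℕ} (h : i ≤ j) : cc ℓ h₁ i ≤ cc ℓ h₁ j := by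
  apply mul_le_mul_of_nonneg_right _ (by linarith)
  have h2 : min i ℓ ≤ min j ℓ := by omega
  exact_mod_cast h2

lemma cc_le_top (hh₁ : 0 ≤ h₁) (i : ℕ) : cc ℓ h₁ i ≤ (ℓ : ℤ) * (h₁ + 1) := by
  apply mul_le_mul_of_nonneg_right _ (by linarith)
  have h2 : min i ℓ ≤ ℓ := min_le_right i ℓ
  exact_mod_cast h2

lemma cc_eq_of_le {i : ℕ} (h : i ≤ ℓ) : cc ℓ h₁ i = (i : ℤ) * (h₁ + 1) := by
  simp [cc, min_eq_left h]

lemma cc_eq_of_ge {i : ℕ} (h : ℓ ≤ i) : cc ℓ h₁ i = (ℓ : ℤ) * (h₁ + 1) := by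
  simp [cc, min_eq_right h]

lemma cc_add_le (hh₁ : 0 ≤ h₁) (i j : ℕ) : cc ℓ h₁ (i + j) ≤ cc ℓ h₁ i + cc ℓ h₁ j := by
  unfold cc
  rw [← add_mul]
  apply mul_le_mul_of_nonneg_right _ (by linarith)
  have h2 : min (i + j) ℓ ≤ min i ℓ + min j ℓ := by omega
  exact_mod_cast h2

lemma cc_one_le (hh₁ : 0 ≤ h₁) {i : ℕ} (hℓ : 1 ≤ ℓ) (hi : 1 ≤ i) :
    h₁ + 1 ≤ cc ℓ h₁ i := by
  have : cc ℓ h₁ 1 = ((1:ℕ):ℤ) * (h₁ + 1) := cc_eq_of_le (by omega)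
  have h2 := cc_mono (ℓ := ℓ) hh₁ hi
  simp at this
  linarith

lemma ee_add (i j : ℕ) :
    ee ℓ a h₁ α i + ee ℓ a h₁ α j
      = ee ℓ a h₁ α (i + j) + (cc ℓ h₁ i + cc ℓ h₁ j - cc ℓ h₁ (i + j)) * a := by
  unfold ee; push_cast; ring

lemma ee_add_ge {i j : ℕ} (h : a ≤ i + j) :
    ee ℓ a h₁ α i + ee ℓ a h₁ α j
      = ee ℓ a h₁ α (i + j - a)
        + (cc ℓ h₁ i + cc ℓ h₁ j - cc ℓ h₁ (i + j - a) + α) * a := by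
  unfold ee
  have : ((i + j - a : ℕ) : ℤ) = (i : ℤ) + j - a := by omega
  rw [this]; push_cast; ring

lemma ee_nonneg (hh₁ : 0 ≤ h₁) (hα : 0 < α) (i : ℕ) : 0 ≤ ee ℓ a h₁ α i := by
  unfold ee
  have := cc_nonneg (ℓ := ℓ) hh₁ i
  have : (0:ℤ) ≤ (i:ℤ) * α := by positivity
  positivity

lemma ee_pos (hh₁ : 0 ≤ h₁) (hα : 0 < α) {i : ℕ} (hi : 1 ≤ i) : 0 < ee ℓ a h₁ α i := by
  unfold ee
  have h1 := cc_nonneg (ℓ := ℓ) hh₁ i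
  have h2 : (1:ℤ) ≤ (i:ℤ) := by exact_mod_cast hi
  nlinarith

lemma ee_zero : ee ℓ a h₁ α 0 = 0 := by simp [ee, cc]

lemma ee_strictMono (hh₁ : 0 ≤ h₁) (hα : 0 < α) (ha : 0 < a) :
    StrictMono (ee ℓ a h₁ α) := by
  apply strictMono_nat_of_lt_succ
  intro i
  unfold ee
  have h1 := cc_mono (ℓ := ℓ) hh₁ (Nat.le_succ i)
  have h2 : (i:ℤ) < (i+1:ℕ) := by push_cast; linarith
  have ha' : (0:ℤ) < a := by exact_mod_cast ha
  nlinarith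

lemma rep_unique (hgcd : Int.gcd (a : ℤ) α = 1) (ha0 : 0 < a) {i j : ℕ} {m m' : ℤ}
    (hi : i < a) (hj : j < a)
    (h : ee ℓ a h₁ α i + m * a = ee ℓ a h₁ α j + m' * a) : i = j ∧ m = m' := by
  have hcop : IsCoprime (a : ℤ) α := Int.isCoprime_iff_gcd_eq_one.mpr hgcd
  have hd : (a : ℤ) ∣ ((i : ℤ) - j) * α := by
    refine ⟨cc ℓ h₁ j - cc ℓ h₁ i + m' - m, ?_⟩
    unfold ee at h; linear_combination h
  have hd2 : (a : ℤ) ∣ ((i : ℤ) - j) := hcop.dvd_of_dvd_mul_right hd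
  obtain ⟨q, hq⟩ := hd2
  have ha' : (0:ℤ) < a := by exact_mod_cast ha0
  have hi' : (i:ℤ) < a := by exact_mod_cast hi
  have hj' : (j:ℤ) < a := by exact_mod_cast hj
  have hi0 : (0:ℤ) ≤ i := Int.ofNat_nonneg i
  have hj0 : (0:ℤ) ≤ j := Int.ofNat_nonneg j
  have hq0 : q = 0 := by
    rcases lt_trichotomy q 0 with hq1 | hq1 | hq1
    · have : q ≤ -1 := by omega
      nlinarith
    · exact hq1
    · have : 1 ≤ q := by omega
      nlinarith
  have hij : i = j := by
    have : (i:ℤ) = j := by rw [hq0] at hq; linarith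
    exact_mod_cast this
  subst hij
  refine ⟨rfl, ?_⟩
  have : m * a = m' * a := by linarith
  exact mul_right_cancel₀ (by positivity) this


section Main

variable {ℓ n : ℕ} {α h₁ : ℤ} {a : ℕ} {b : ℤ} {H : Set ℤ}

/-- e i is in H for i < a -/
lemma ee_mem (hℓ : 2 ≤ ℓ) (hn : 3 ≤ n) (hh₁ : 0 ≤ h₁)
    (ha : a = ℓ + n - 1) (hb : b = (h₁ + 1) * a + α)
    (hH : H = (AddSubmonoid.closure ({(a : ℤ), b} ∪
        {x : ℤ | ∃ i : ℕ, 1 ≤ i ∧ i ≤ n - 2 ∧ x = (ℓ : ℤ) * b + (i : ℤ) * α}) : AddSubmonoid ℤ))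
    {i : ℕ} (hi : i < a) : ee ℓ a h₁ α i ∈ H := by
  subst hH
  have hbmem : b ∈ AddSubmonoid.closure ({(a : ℤ), b} ∪
      {x : ℤ | ∃ i : ℕ, 1 ≤ i ∧ i ≤ n - 2 ∧ x = (ℓ : ℤ) * b + (i : ℤ) * α}) :=
    AddSubmonoid.subset_closure (Or.inl (by simp))
  rcases le_or_gt i ℓ with hil | hil
  · have : ee ℓ a h₁ α i = (i : ℤ) * b := by
      unfold ee; rw [cc_eq_of_le hil, hb]; ring
    rw [this]
    have := AddSubmonoid.nsmul_mem _ hbmem i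
    rwa [nsmul_eq_mul] at this
  · apply AddSubmonoid.subset_closure
    right
    refine ⟨i - ℓ, by omega, by omega, ?_⟩
    unfold ee
    rw [cc_eq_of_ge (by omega), hb]
    have : ((i - ℓ : ℕ) : ℤ) = (i : ℤ) - ℓ := by omega
    rw [this]; ring

lemma mul_a_mem (ha : a = ℓ + n - 1)
    (hH : H = (AddSubmonoid.closure ({(a : ℤ), b} ∪
        {x : ℤ | ∃ i : ℕ, 1 ≤ i ∧ i ≤ n - 2 ∧ x = (ℓ : ℤ) * b + (i : ℤ) * α}) : AddSubmonoid ℤ))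
    {m : ℤ} (hm : 0 ≤ m) : m * a ∈ H := by
  subst hH
  have hamem : (a : ℤ) ∈ AddSubmonoid.closure ({(a : ℤ), b} ∪
      {x : ℤ | ∃ i : ℕ, 1 ≤ i ∧ i ≤ n - 2 ∧ x = (ℓ : ℤ) * b + (i : ℤ) * α}) :=
    AddSubmonoid.subset_closure (Or.inl (by simp))
  have := AddSubmonoid.nsmul_mem _ hamem m.toNat
  rwa [nsmul_eq_mul, Int.toNat_of_nonneg hm] at this

lemma mem_iff (hℓ : 2 ≤ ℓ) (hn : 3 ≤ n) (hα : 0 < α) (hh₁ : 0 ≤ h₁)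
    (ha : a = ℓ + n - 1) (hb : b = (h₁ + 1) * a + α)
    (hH : H = (AddSubmonoid.closure ({(a : ℤ), b} ∪
        {x : ℤ | ∃ i : ℕ, 1 ≤ i ∧ i ≤ n - 2 ∧ x = (ℓ : ℤ) * b + (i : ℤ) * α}) : AddSubmonoid ℤ))
    (x : ℤ) :
    x ∈ H ↔ ∃ i, i < a ∧ ∃ m : ℤ, 0 ≤ m ∧ x = ee ℓ a h₁ α i + m * a := by
  have ha0 : 0 < a := by omega
  constructor
  · intro hx
    rw [hH] at hx
    induction hx using AddSubmonoid.closure_induction with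
    | mem x hxs =>
      rcases hxs with (h1 | h1) | ⟨j, hj1, hj2, rfl⟩
      · -- x = a
        refine ⟨0, ha0, 1, by norm_num, ?_⟩
        rw [ee_zero, h1]; ring
      · -- x = b
        refine ⟨1, by omega, 0, le_refl 0, ?_⟩
        unfold ee
        rw [cc_eq_of_le (by omega), h1, hb]; push_cast; ring
      · refine ⟨ℓ + j, by omega, 0, le_refl 0, ?_⟩
        unfold ee
        rw [cc_eq_of_ge (by omega), hb]; push_cast; ring
    | zero => exact ⟨0, ha0, 0, le_refl 0, by rw [ee_zero]; ring⟩
    | add x y hx hy ihx ihy =>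
      obtain ⟨i, hi, m, hm, rfl⟩ := ihx
      obtain ⟨j, hj, m', hm', rfl⟩ := ihy
      rcases lt_or_ge (i + j) a with hija | hija
      · refine ⟨i + j, hija, cc ℓ h₁ i + cc ℓ h₁ j - cc ℓ h₁ (i + j) + m + m', ?_, ?_⟩
        · have := cc_add_le (ℓ := ℓ) hh₁ i j
          linarith
        · have := ee_add (ℓ := ℓ) (a := a) (h₁ := h₁) (α := α) i j
          linarith [this]
      · refine ⟨i + j - a, by omega,
          cc ℓ h₁ i + cc ℓ h₁ j - cc ℓ h₁ (i + j - a) + α + m + m', ?_, ?_⟩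
        · have h1 : cc ℓ h₁ (i + j - a) ≤ cc ℓ h₁ i := cc_mono hh₁ (by omega)
          have h2 := cc_nonneg (ℓ := ℓ) hh₁ j
          linarith
        · have := ee_add_ge (ℓ := ℓ) (h₁ := h₁) (α := α) hija
          linarith [this]
  · rintro ⟨i, hi, m, hm, rfl⟩
    have h1 := ee_mem hℓ hn hh₁ ha hb hH hi
    have h2 := mul_a_mem ha hH hm
    rw [hH] at h1 h2 ⊢
    exact AddSubmonoid.add_mem _ h1 h2

lemma nonneg_of_mem (hh₁ : 0 ≤ h₁) (hα : 0 < α) (ha0 : 0 < a)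
    (hmem : ∀ x, x ∈ H ↔ ∃ i, i < a ∧ ∃ m : ℤ, 0 ≤ m ∧ x = ee ℓ a h₁ α i + m * a)
    {x : ℤ} (hx : x ∈ H) : 0 ≤ x := by
  obtain ⟨i, hi, m, hm, rfl⟩ := (hmem x).mp hx
  have h1 := ee_nonneg (ℓ := ℓ) (a := a) hh₁ hα i
  have ha' : (0:ℤ) < a := by exact_mod_cast ha0
  nlinarith

lemma partA (hℓ : 2 ≤ ℓ) (hn : 3 ≤ n) (hα : 0 < α) (hh₁ : 0 ≤ h₁)
    (ha : a = ℓ + n - 1) (hgcd : Int.gcd (a : ℤ) α = 1)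
    (hmem : ∀ x, x ∈ H ↔ ∃ i, i < a ∧ ∃ m : ℤ, 0 ≤ m ∧ x = ee ℓ a h₁ α i + m * a) :
    IsNumericalSemigroup H := by
  have ha0 : 0 < a := by omega
  have ha' : (0:ℤ) < a := by exact_mod_cast ha0
  refine ⟨?_, ?_, fun x hx => nonneg_of_mem hh₁ hα ha0 hmem hx, ?_⟩
  · exact (hmem 0).mpr ⟨0, ha0, 0, le_refl 0, by rw [ee_zero]; ring⟩
  · intro x hx y hy
    obtain ⟨i, hi, m, hm, rfl⟩ := (hmem x).mp hx
    obtain ⟨j, hj, m', hm', rfl⟩ := (hmem y).mp hy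
    apply (hmem _).mpr
    rcases lt_or_ge (i + j) a with hija | hija
    · refine ⟨i + j, hija, cc ℓ h₁ i + cc ℓ h₁ j - cc ℓ h₁ (i + j) + m + m', ?_, ?_⟩
      · have := cc_add_le (ℓ := ℓ) hh₁ i j
        linarith
      · have := ee_add (ℓ := ℓ) (a := a) (h₁ := h₁) (α := α) i j
        linarith
    · refine ⟨i + j - a, by omega,
        cc ℓ h₁ i + cc ℓ h₁ j - cc ℓ h₁ (i + j - a) + α + m + m', ?_, ?_⟩
      · have h1 : cc ℓ h₁ (i + j - a) ≤ cc ℓ h₁ i := cc_mono hh₁ (by omega)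
        have h2 := cc_nonneg (ℓ := ℓ) hh₁ j
        linarith
      · have := ee_add_ge (ℓ := ℓ) (h₁ := h₁) (α := α) hija
        linarith
  · -- finite complement
    set B : ℤ := (ℓ : ℤ) * (h₁ + 1) * a + a * α with hB
    apply Set.Finite.subset (Set.finite_Ico (0:ℤ) B)
    rintro z ⟨hz0, hzH⟩
    refine ⟨hz0, ?_⟩
    by_contra hzB
    push_neg at hzB
    apply hzH
    -- find residue index
    obtain ⟨s, t, hst⟩ : ∃ s t : ℤ, 1 = (a:ℤ) * s + α * t := by
      refine ⟨Int.gcdA a α, Int.gcdB a α, ?_⟩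
      have := Int.gcd_eq_gcd_ab (a : ℤ) α
      rw [hgcd] at this
      exact_mod_cast this
    set j : ℤ := (z * t) % a with hj
    have hj0 : 0 ≤ j := Int.emod_nonneg _ (by positivity)
    have hja : j < a := Int.emod_lt_of_pos _ ha'
    set i : ℕ := j.toNat with hi
    have hij : (i : ℤ) = j := Int.toNat_of_nonneg hj0
    have hia : i < a := by omega
    have hdvd : (a:ℤ) ∣ z - (i:ℤ) * α := by
      refine ⟨z * s + (z * t / a) * α, ?_⟩
      rw [hij, hj]
      have hmod : z * t % a = z * t - a * (z * t / a) := by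
        rw [Int.emod_def]
      rw [hmod]
      linear_combination z * hst
    have heei : ee ℓ a h₁ α i ≤ B := by
      unfold ee
      have h1 := cc_le_top (ℓ := ℓ) hh₁ i
      have h2 : (i:ℤ) * α ≤ (a:ℤ) * α := by
        apply mul_le_mul_of_nonneg_right _ (le_of_lt hα)
        exact_mod_cast le_of_lt hia
      nlinarith
    obtain ⟨q, hq⟩ : (a:ℤ) ∣ z - ee ℓ a h₁ α i := by
      obtain ⟨q, hq⟩ := hdvd
      exact ⟨q - cc ℓ h₁ i, by unfold ee; linarith [hq]; ⟩
    have hq0 : 0 ≤ q := by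
      by_contra hq1
      push_neg at hq1
      have : q ≤ -1 := by omega
      nlinarith
    exact (hmem z).mpr ⟨i, hia, q, hq0, by linarith⟩

lemma partB (hℓ : 2 ≤ ℓ) (hn : 3 ≤ n) (hα : 0 < α) (hh₁ : 0 ≤ h₁)
    (ha : a = ℓ + n - 1)
    (hmem : ∀ x, x ∈ H ↔ ∃ i, i < a ∧ ∃ m : ℤ, 0 ≤ m ∧ x = ee ℓ a h₁ α i + m * a) :
    IsLeast {x ∈ H | x ≠ 0} (a : ℤ) := by
  have ha0 : 0 < a := by omega
  have ha' : (0:ℤ) < a := by exact_mod_cast ha0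
  constructor
  · refine ⟨(hmem _).mpr ⟨0, ha0, 1, by norm_num, by rw [ee_zero]; ring⟩, by positivity⟩
  · rintro x ⟨hx, hx0⟩
    obtain ⟨i, hi, m, hm, rfl⟩ := (hmem x).mp hx
    rcases Nat.eq_zero_or_pos i with rfl | hi1
    · rw [ee_zero] at hx0 ⊢
      have : m ≠ 0 := by
        intro h; apply hx0; rw [h]; ring
      have : 1 ≤ m := by omega
      nlinarith
    · have h1 : h₁ + 1 ≤ cc ℓ h₁ i := cc_one_le hh₁ (by omega) hi1
      have h2 : (1:ℤ) ≤ (i:ℤ) := by exact_mod_cast hi1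
      unfold ee
      nlinarith

lemma not_mem_sub_a (hgcd : Int.gcd (a : ℤ) α = 1) (ha0 : 0 < a)
    (hmem : ∀ x, x ∈ H ↔ ∃ i, i < a ∧ ∃ m : ℤ, 0 ≤ m ∧ x = ee ℓ a h₁ α i + m * a)
    {i : ℕ} (hi : i < a) : ee ℓ a h₁ α i - a ∉ H := by
  intro hcon
  obtain ⟨j, hj, m, hm, hEq⟩ := (hmem _).mp hcon
  have hEq' : ee ℓ a h₁ α i + (-1) * a = ee ℓ a h₁ α j + m * a := by linarith
  obtain ⟨rfl, hm1⟩ := rep_unique hgcd ha0 hi hj hEq'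
  omega

lemma partD (hℓ : 2 ≤ ℓ) (hn : 3 ≤ n) (hα : 0 < α) (hh₁ : 0 ≤ h₁)
    (ha : a = ℓ + n - 1) (hb : b = (h₁ + 1) * a + α) (hgcd : Int.gcd (a : ℤ) α = 1)
    (hmem : ∀ x, x ∈ H ↔ ∃ i, i < a ∧ ∃ m : ℤ, 0 ≤ m ∧ x = ee ℓ a h₁ α i + m * a) :
    Ap H a = {x : ℤ | ∃ i : ℕ, i ≤ ℓ ∧ x = (i : ℤ) * b} ∪
        {x : ℤ | ∃ i : ℕ, 1 ≤ i ∧ i ≤ n - 2 ∧ x = (ℓ : ℤ) * b + (i : ℤ) * α} := by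
  have ha0 : 0 < a := by omega
  have hlow : ∀ i : ℕ, i ≤ ℓ → ee ℓ a h₁ α i = (i : ℤ) * b := by
    intro i hil
    unfold ee; rw [cc_eq_of_le hil, hb]; ring
  have hhigh : ∀ i : ℕ, 1 ≤ i → i ≤ n - 2 → ee ℓ a h₁ α (ℓ + i) = (ℓ:ℤ) * b + (i:ℤ) * α := by
    intro i h1 h2
    unfold ee; rw [cc_eq_of_ge (by omega), hb]; push_cast; ring
  ext x
  constructor
  · rintro ⟨hx, hxa⟩
    obtain ⟨i, hi, m, hm, rfl⟩ := (hmem x).mp hx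
    have hm0 : m = 0 := by
      by_contra hm1
      apply hxa
      refine (hmem _).mpr ⟨i, hi, m - 1, by omega, by ring⟩
    subst hm0
    rcases le_or_gt i ℓ with hil | hil
    · exact Or.inl ⟨i, hil, by rw [← hlow i hil]; ring⟩
    · refine Or.inr ⟨i - ℓ, by omega, by omega, ?_⟩
      rw [← hhigh (i - ℓ) (by omega) (by omega)]
      have : ℓ + (i - ℓ) = i := by omega
      rw [this]; ring
  · intro hx
    have : ∃ i : ℕ, i < a ∧ x = ee ℓ a h₁ α i := by
      rcases hx with ⟨i, hil, rfl⟩ | ⟨i, h1, h2, rfl⟩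
      · exact ⟨i, by omega, (hlow i hil).symm⟩
      · exact ⟨ℓ + i, by omega, (hhigh i h1 h2).symm⟩
    obtain ⟨i, hi, rfl⟩ := this
    exact ⟨(hmem _).mpr ⟨i, hi, 0, le_refl 0, by ring⟩, not_mem_sub_a hgcd ha0 hmem hi⟩

lemma partE (hℓ : 2 ≤ ℓ) (hn : 3 ≤ n) (hα : 0 < α) (hh₁ : 0 ≤ h₁)
    (ha : a = ℓ + n - 1) (hb : b = (h₁ + 1) * a + α) (hgcd : Int.gcd (a : ℤ) α = 1)
    (hmem : ∀ x, x ∈ H ↔ ∃ i, i < a ∧ ∃ m : ℤ, 0 ≤ m ∧ x = ee ℓ a h₁ α i + m * a) :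
    PF H = {x : ℤ | ∃ i : ℕ, 1 ≤ i ∧ i ≤ n - 1 ∧
        x = (h₁ * a + (ℓ - 1 : ℤ) * b) + (i : ℤ) * α} := by
  have ha0 : 0 < a := by omega
  have ha' : (0:ℤ) < a := by exact_mod_cast ha0
  -- key identity: for 1 ≤ i, h + i*α = ee (ℓ + i - 1) - a
  have hkey : ∀ i : ℕ, 1 ≤ i →
      (h₁ * a + ((ℓ:ℤ) - 1) * b) + (i:ℤ) * α = ee ℓ a h₁ α (ℓ + i - 1) - a := by
    intro i hi
    unfold ee
    rw [cc_eq_of_ge (by omega), hb]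
    have : ((ℓ + i - 1 : ℕ) : ℤ) = (ℓ:ℤ) + i - 1 := by omega
    rw [this]; ring
  ext f
  constructor
  · rintro ⟨hfH, hf⟩
    have haH : (a:ℤ) ∈ H := (hmem _).mpr ⟨0, ha0, 1, by norm_num, by rw [ee_zero]; ring⟩
    have hfa : f + a ∈ H := hf _ haH (by positivity)
    obtain ⟨j, hj, m, hm, hEq⟩ := (hmem _).mp hfa
    have hm0 : m = 0 := by
      by_contra hm1
      exact hfH ((hmem _).mpr ⟨j, hj, m - 1, by omega, by linarith⟩)
    subst hm0
    have hf' : f = ee ℓ a h₁ α j - a := by linarith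
    have hjl : ℓ ≤ j := by
      by_contra hjl
      push_neg at hjl
      have hbH : b ∈ H := (hmem _).mpr ⟨1, by omega, 0, le_refl 0, by
        unfold ee; rw [cc_eq_of_le (by omega), hb]; push_cast; ring⟩
      have hbpos : (0:ℤ) < b := by rw [hb]; nlinarith
      have hb0 : b ≠ 0 := hbpos.ne'
      have hfb : f + b ∈ H := hf _ hbH hb0
      have hfb' : f + b = ee ℓ a h₁ α (j + 1) - a := by
        rw [hf']
        unfold ee
        rw [cc_eq_of_le (by omega), cc_eq_of_le (by omega), hb]
        push_cast; ring
      rw [hfb'] at hfb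
      exact not_mem_sub_a hgcd ha0 hmem (by omega) hfb
    refine ⟨j - ℓ + 1, by omega, by omega, ?_⟩
    rw [hkey (j - ℓ + 1) (by omega)]
    have : ℓ + (j - ℓ + 1) - 1 = j := by omega
    rw [this, hf']
  · rintro ⟨i, hi1, hi2, rfl⟩
    rw [hkey i hi1]
    set j : ℕ := ℓ + i - 1 with hjdef
    have hjl : ℓ ≤ j := by omega
    have hja : j < a := by omega
    constructor
    · exact not_mem_sub_a hgcd ha0 hmem hja
    · intro s hs hs0
      obtain ⟨k, hk, m, hm, rfl⟩ := (hmem s).mp hs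
      rcases Nat.eq_zero_or_pos k with rfl | hk1
      · rw [ee_zero] at hs0 ⊢
        have hm1 : 1 ≤ m := by
          rcases eq_or_lt_of_le hm with h | h
          · exfalso; apply hs0; rw [← h]; ring
          · omega
        apply (hmem _).mpr
        exact ⟨j, hja, m - 1, by omega, by ring⟩
      · -- k ≥ 1 : ee j + ee k = ee r + p * a with p ≥ 1
        have hcj : cc ℓ h₁ j = (ℓ:ℤ) * (h₁ + 1) := cc_eq_of_ge hjl
        apply (hmem _).mpr
        rcases lt_or_ge (j + k) a with hjka | hjka
        · refine ⟨j + k, hjka, cc ℓ h₁ j + cc ℓ h₁ k - cc ℓ h₁ (j + k) - 1 + m, ?_, ?_⟩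
          · have h1 := cc_le_top (ℓ := ℓ) hh₁ (j + k)
            have h2 := cc_one_le (ℓ := ℓ) hh₁ (by omega) hk1
            linarith
          · have := ee_add (ℓ := ℓ) (a := a) (h₁ := h₁) (α := α) j k
            linarith
        · refine ⟨j + k - a, by omega,
            cc ℓ h₁ j + cc ℓ h₁ k - cc ℓ h₁ (j + k - a) + α - 1 + m, ?_, ?_⟩
          · have h1 := cc_le_top (ℓ := ℓ) hh₁ (j + k - a)
            have h2 := cc_nonneg (ℓ := ℓ) hh₁ k
            linarith
          · have := ee_add_ge (ℓ := ℓ) (h₁ := h₁) (α := α) hjka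
            linarith

lemma partC (hℓ : 2 ≤ ℓ) (hn : 3 ≤ n) (hα : 0 < α) (hh₁ : 0 ≤ h₁)
    (ha : a = ℓ + n - 1) (hb : b = (h₁ + 1) * a + α) (hgcd : Int.gcd (a : ℤ) α = 1)
    (hmem : ∀ x, x ∈ H ↔ ∃ i, i < a ∧ ∃ m : ℤ, 0 ≤ m ∧ x = ee ℓ a h₁ α i + m * a) :
    (MinGens H).ncard = n := by
  have ha0 : 0 < a := by omega
  have ha' : (0:ℤ) < a := by exact_mod_cast ha0
  have hh₁' : (0:ℤ) < h₁ + 1 := by linarith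
  have heeH : ∀ i : ℕ, i < a → ee ℓ a h₁ α i ∈ H := fun i hi =>
    (hmem _).mpr ⟨i, hi, 0, le_refl 0, by ring⟩
  have haH : (a:ℤ) ∈ H := (hmem _).mpr ⟨0, ha0, 1, by norm_num, by rw [ee_zero]; ring⟩
  have hlb := (partB hℓ hn hα hh₁ ha hmem).2
  -- non-decomposability of generators ee i with i = 1 or ℓ < i
  have hnd : ∀ i : ℕ, i < a → (i = 1 ∨ ℓ < i) →
      ¬ ∃ y ∈ H, ∃ z ∈ H, y ≠ 0 ∧ z ≠ 0 ∧ y + z = ee ℓ a h₁ α i := by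
    rintro i hi hcase ⟨y, hy, z, hz, hy0, hz0, hyz⟩
    obtain ⟨j, hj, m, hm, rfl⟩ := (hmem y).mp hy
    obtain ⟨k, hk, m', hm', rfl⟩ := (hmem z).mp hz
    rcases lt_or_ge (j + k) a with hjka | hjka
    · have hadd := ee_add (ℓ := ℓ) (a := a) (h₁ := h₁) (α := α) j k
      set p : ℤ := cc ℓ h₁ j + cc ℓ h₁ k - cc ℓ h₁ (j + k) with hp
      have hp0 : 0 ≤ p := by have := cc_add_le (ℓ := ℓ) hh₁ j k; linarith
      have hEq : ee ℓ a h₁ α (j + k) + (p + m + m') * a = ee ℓ a h₁ α i + 0 * a := by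
        linarith
      obtain ⟨hjk, hsum⟩ := rep_unique hgcd ha0 hjka hi hEq
      have hm0 : m = 0 := by omega
      have hm'0 : m' = 0 := by omega
      have hpz : p = 0 := by omega
      subst hm0; subst hm'0
      have hj1 : 1 ≤ j := by
        rcases Nat.eq_zero_or_pos j with rfl | h
        · exfalso; apply hy0; rw [ee_zero]; ring
        · exact h
      have hk1 : 1 ≤ k := by
        rcases Nat.eq_zero_or_pos k with rfl | h
        · exfalso; apply hz0; rw [ee_zero]; ring
        · exact h
      rcases hcase with rfl | hil
      · omega
      · -- cc j + cc k = cc i with i = j + k > ℓ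
        have hcc : cc ℓ h₁ j + cc ℓ h₁ k = cc ℓ h₁ i := by
          rw [← hjk]; linarith
        have hcc2 : ((min j ℓ + min k ℓ : ℕ) : ℤ) * (h₁ + 1) = ((min i ℓ : ℕ) : ℤ) * (h₁ + 1) := by
          unfold cc at hcc; push_cast at hcc ⊢; linarith
        have hcc3 : min j ℓ + min k ℓ = min i ℓ := by
          have := mul_right_cancel₀ hh₁'.ne' hcc2
          exact_mod_cast this
        omega
    · have hadd := ee_add_ge (ℓ := ℓ) (h₁ := h₁) (α := α) hjka
      set p : ℤ := cc ℓ h₁ j + cc ℓ h₁ k - cc ℓ h₁ (j + k - a) + α with hp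
      have hp0 : 0 < p := by
        have h1 : cc ℓ h₁ (j + k - a) ≤ cc ℓ h₁ j := cc_mono hh₁ (by omega)
        have h2 := cc_nonneg (ℓ := ℓ) hh₁ k
        linarith
      have hEq : ee ℓ a h₁ α (j + k - a) + (p + m + m') * a = ee ℓ a h₁ α i + 0 * a := by
        linarith
      obtain ⟨hjk, hsum⟩ := rep_unique hgcd ha0 (by omega) hi hEq
      omega
  -- identify MinGens
  have hset : MinGens H = insert ((a:ℕ) : ℤ)
      (ee ℓ a h₁ α '' ({1} ∪ Set.Icc (ℓ + 1) (a - 1))) := by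
    ext x
    constructor
    · rintro ⟨hx, hx0, hxnd⟩
      obtain ⟨i, hi, m, hm, rfl⟩ := (hmem x).mp hx
      rcases eq_or_lt_of_le hm with hm0 | hm1
      · -- m = 0
        subst hm0
        rcases Nat.eq_zero_or_pos i with rfl | hi1
        · exfalso; apply hx0; rw [ee_zero]; ring
        rcases eq_or_lt_of_le (Nat.succ_le_of_lt hi1) with hi2 | hi2
        · right; exact ⟨1, Or.inl rfl, by rw [← hi2]; ring⟩
        rcases le_or_gt i ℓ with hil | hil
        · -- 2 ≤ i ≤ ℓ : decomposable, contradiction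
          exfalso; apply hxnd
          refine ⟨ee ℓ a h₁ α 1, heeH 1 (by omega), ee ℓ a h₁ α (i - 1),
            heeH (i - 1) (by omega), (ee_pos hh₁ hα (by omega)).ne',
            (ee_pos hh₁ hα (by omega)).ne', ?_⟩
          unfold ee
          rw [cc_eq_of_le (show 1 ≤ ℓ by omega), cc_eq_of_le (show i - 1 ≤ ℓ by omega),
            cc_eq_of_le hil]
          have h1 : ((i - 1 : ℕ) : ℤ) = (i:ℤ) - 1 := by omega
          rw [h1]; push_cast; ring
        · right; exact ⟨i, Or.inr ⟨by omega, by omega⟩, by ring⟩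
      · -- m ≥ 1
        rcases Nat.eq_zero_or_pos i with rfl | hi1
        · rcases eq_or_lt_of_le (Int.add_one_le_of_lt hm1) with hm2 | hm2
          · left; rw [ee_zero, ← hm2]; ring
          · exfalso; apply hxnd
            refine ⟨(a:ℤ), haH, ee ℓ a h₁ α 0 + (m - 1) * a,
              (hmem _).mpr ⟨0, ha0, m - 1, by omega, rfl⟩, ha'.ne', ?_, by ring⟩
            rw [ee_zero]
            have : (0:ℤ) < 0 + (m - 1) * a := by nlinarith
            exact this.ne'
        · exfalso; apply hxnd
          refine ⟨(a:ℤ), haH, ee ℓ a h₁ α i + (m - 1) * a,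
            (hmem _).mpr ⟨i, hi, m - 1, by omega, rfl⟩, ha'.ne', ?_, by ring⟩
          have h1 := ee_pos (ℓ := ℓ) (a := a) (α := α) hh₁ hα hi1
          have : (0:ℤ) < ee ℓ a h₁ α i + (m - 1) * a := by nlinarith
          exact this.ne'
    · intro hx
      rcases hx with rfl | ⟨i, hiS, rfl⟩
      · refine ⟨haH, ha'.ne', ?_⟩
        rintro ⟨y, hy, z, hz, hy0, hz0, hyz⟩
        have h1 := hlb ⟨hy, hy0⟩
        have h2 := hlb ⟨hz, hz0⟩
        linarith
      · have hi : i < a ∧ (i = 1 ∨ ℓ < i) := by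
          rcases hiS with rfl | ⟨h1, h2⟩
          · exact ⟨by omega, Or.inl rfl⟩
          · exact ⟨by omega, Or.inr (by omega)⟩
        exact ⟨heeH i hi.1, (ee_pos hh₁ hα (by rcases hi.2 with rfl | h <;> omega)).ne',
          hnd i hi.1 hi.2⟩
  -- cardinality
  rw [hset]
  have hinj : Function.Injective (ee ℓ a h₁ α) := (ee_strictMono hh₁ hα ha0).injective
  have hSfin : ({1} ∪ Set.Icc (ℓ + 1) (a - 1) : Set ℕ).Finite :=
    (Set.finite_singleton 1).union (Set.finite_Icc _ _)
  have hnm : ((a:ℕ):ℤ) ∉ ee ℓ a h₁ α '' ({1} ∪ Set.Icc (ℓ + 1) (a - 1)) := by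
    rintro ⟨i, hiS, hEq⟩
    have hi1 : 1 ≤ i := by rcases hiS with rfl | ⟨h1, h2⟩ <;> omega
    have h1 : ee ℓ a h₁ α 1 ≤ ee ℓ a h₁ α i := (ee_strictMono hh₁ hα ha0).monotone hi1
    have h2 : ee ℓ a h₁ α 1 = (h₁ + 1) * a + α := by
      unfold ee; rw [cc_eq_of_le (by omega)]; push_cast; ring
    nlinarith [hEq, h1, h2]
  rw [Set.ncard_insert_of_notMem hnm (hSfin.image _),
    Set.ncard_image_of_injective _ hinj, Set.singleton_union,
    Set.ncard_insert_of_notMem (by simp; omega) (Set.finite_Icc _ _),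
    show (Set.Icc (ℓ+1) (a-1)) = ↑(Finset.Icc (ℓ+1) (a-1)) by simp,
    Set.ncard_coe_finset, Nat.card_Icc]
  omega

end Main

end NS12

theorem stmt12 (ℓ n : ℕ) (hℓ : 2 ≤ ℓ) (hn : 3 ≤ n) (α h₁ : ℤ) (hα : 0 < α) (hh₁ : 0 ≤ h₁)
    (a : ℕ) (ha : a = ℓ + n - 1) (b : ℤ) (hb : b = (h₁ + 1) * a + α)
    (hgcd : Int.gcd (a : ℤ) α = 1)
    (H : Set ℤ)
    (hH : H = (AddSubmonoid.closure ({(a : ℤ), b} ∪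
        {x : ℤ | ∃ i : ℕ, 1 ≤ i ∧ i ≤ n - 2 ∧ x = (ℓ : ℤ) * b + (i : ℤ) * α}) : AddSubmonoid ℤ)) :
    IsNumericalSemigroup H ∧
    IsLeast {x ∈ H | x ≠ 0} (a : ℤ) ∧
    (MinGens H).ncard = n ∧
    Ap H a = {x : ℤ | ∃ i : ℕ, i ≤ ℓ ∧ x = (i : ℤ) * b} ∪
        {x : ℤ | ∃ i : ℕ, 1 ≤ i ∧ i ≤ n - 2 ∧ x = (ℓ : ℤ) * b + (i : ℤ) * α} ∧
    PF H = {x : ℤ | ∃ i : ℕ, 1 ≤ i ∧ i ≤ n - 1 ∧ x = (h₁ * a + (ℓ - 1 : ℤ) * b) + (i : ℤ) * α} := by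
  have hmem := NS12.mem_iff hℓ hn hα hh₁ ha hb hH
  exact ⟨NS12.partA hℓ hn hα hh₁ ha hgcd hmem,
    NS12.partB hℓ hn hα hh₁ ha hmem,
    NS12.partC hℓ hn hα hh₁ ha hb hgcd hmem,
    NS12.partD hℓ hn hα hh₁ ha hb hgcd hmem,
    NS12.partE hℓ hn hα hh₁ ha hb hgcd hmem⟩
end

section
/- Let H = ⟨8, 9, 31, 37, 38⟩. Then Ap(H, 8) = {0, 9, 18, 27, 31, 36, 37, 38} and PF(H) = {23, 28, 29, 30}; in particular PF(H) has 4 elements but is not an arithmetic progression. -/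
private def cond16 (x : ℤ) : Prop :=
  0 ≤ x ∧ (x % 8 = 0 ∨ (x % 8 = 1 ∧ 9 ≤ x) ∨ (x % 8 = 2 ∧ 18 ≤ x) ∨
      (x % 8 = 3 ∧ 27 ≤ x) ∨ (x % 8 = 4 ∧ 36 ≤ x) ∨ (x % 8 = 5 ∧ 37 ≤ x) ∨
      (x % 8 = 6 ∧ 38 ≤ x) ∨ (x % 8 = 7 ∧ 31 ≤ x))

set_option maxHeartbeats 1600000 in
private def T16 : AddSubmonoid ℤ where
  carrier := {x : ℤ | cond16 x}
  zero_mem' := by unfold cond16; norm_num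
  add_mem' := by
    intro a b ha hb
    simp only [Set.mem_setOf_eq, cond16] at ha hb ⊢
    obtain ⟨ha0, ha1⟩ := ha
    obtain ⟨hb0, hb1⟩ := hb
    rcases ha1 with h|h|h|h|h|h|h|h <;> rcases hb1 with g|g|g|g|g|g|g|g <;> omega
private lemma mem_T16 (x : ℤ) : x ∈ T16 ↔ cond16 x := Iff.rfl

private lemma aux_mem16 (M : AddSubmonoid ℤ) (h8 : (8:ℤ) ∈ M) {a : ℤ} (ha : a ∈ M)
    {x : ℤ} (hx1 : x % 8 = a % 8) (hx2 : a ≤ x) : x ∈ M := by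
  obtain ⟨k, hk⟩ : ∃ k : ℕ, x = a + 8 * k := ⟨(x - a).toNat / 8, by omega⟩
  have hk8 : ((k : ℤ)) * 8 ∈ M := by
    have := M.nsmul_mem h8 k
    rwa [nsmul_eq_mul] at this
  rw [hk]
  have := M.add_mem ha hk8
  convert this using 2
  ring

private lemma Hchar16 (H : Set ℤ)
    (hH : H = (AddSubmonoid.closure ({8, 9, 31, 37, 38} : Set ℤ) : AddSubmonoid ℤ)) :
    ∀ x : ℤ, x ∈ H ↔ cond16 x := by
  subst hH
  set M := AddSubmonoid.closure ({8, 9, 31, 37, 38} : Set ℤ) with hM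
  have h8 : (8:ℤ) ∈ M := AddSubmonoid.subset_closure (by norm_num)
  have h9 : (9:ℤ) ∈ M := AddSubmonoid.subset_closure (by norm_num)
  have h31 : (31:ℤ) ∈ M := AddSubmonoid.subset_closure (by norm_num)
  have h37 : (37:ℤ) ∈ M := AddSubmonoid.subset_closure (by norm_num)
  have h38 : (38:ℤ) ∈ M := AddSubmonoid.subset_closure (by norm_num)
  have h18 : (18:ℤ) ∈ M := by have := M.add_mem h9 h9; norm_num at this; exact this
  have h27 : (27:ℤ) ∈ M := by have := M.add_mem h18 h9; norm_num at this; exact this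
  have h36 : (36:ℤ) ∈ M := by have := M.add_mem h27 h9; norm_num at this; exact this
  intro x
  constructor
  · intro hx
    have hle : M ≤ T16 := by
      rw [hM]
      apply AddSubmonoid.closure_le.mpr
      intro y hy
      simp only [Set.mem_insert_iff, Set.mem_singleton_iff] at hy
      rcases hy with rfl|rfl|rfl|rfl|rfl <;>
        · rw [SetLike.mem_coe, mem_T16, cond16]; norm_num
    exact hle hx
  · rw [cond16]
    rintro ⟨hx0, h | ⟨h, h'⟩ | ⟨h, h'⟩ | ⟨h, h'⟩ | ⟨h, h'⟩ | ⟨h, h'⟩ | ⟨h, h'⟩ | ⟨h, h'⟩⟩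
    · exact aux_mem16 M h8 M.zero_mem (by omega) (by omega)
    · exact aux_mem16 M h8 h9 (by omega) h'
    · exact aux_mem16 M h8 h18 (by omega) h'
    · exact aux_mem16 M h8 h27 (by omega) h'
    · exact aux_mem16 M h8 h36 (by omega) h'
    · exact aux_mem16 M h8 h37 (by omega) h'
    · exact aux_mem16 M h8 h38 (by omega) h'
    · exact aux_mem16 M h8 h31 (by omega) h'


set_option maxHeartbeats 1600000 in
theorem stmt16 (H : Set ℤ)
    (hH : H = (AddSubmonoid.closure ({8, 9, 31, 37, 38} : Set ℤ) : AddSubmonoid ℤ)) :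
    Ap H 8 = {0, 9, 18, 27, 31, 36, 37, 38} ∧ PF H = {23, 28, 29, 30} ∧
    (PF H).ncard = 4 ∧
    ¬ ∃ s d : ℤ, 0 < d ∧ PF H = {x : ℤ | ∃ i : ℕ, 1 ≤ i ∧ i ≤ 4 ∧ x = s + (i : ℤ) * d} := by
  have hc := Hchar16 H hH
  have hAp : Ap H 8 = {0, 9, 18, 27, 31, 36, 37, 38} := by
    ext x
    simp only [Ap, Set.mem_setOf_eq, hc, cond16, Set.mem_insert_iff, Set.mem_singleton_iff]
    constructor
    · rintro ⟨⟨hx0, hx1⟩, h2⟩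
      have hle : x ≤ 38 := by
        by_contra hgt
        exact h2 ⟨by omega, by omega⟩
      interval_cases x <;> omega
    · intro hx
      rcases hx with rfl|rfl|rfl|rfl|rfl|rfl|rfl|rfl <;> exact ⟨⟨by norm_num, by omega⟩, by omega⟩
  have hPF : PF H = {23, 28, 29, 30} := by
    ext f
    simp only [PF, Set.mem_setOf_eq, hc, cond16, Set.mem_insert_iff, Set.mem_singleton_iff]
    constructor
    · rintro ⟨hf, hall⟩
      have a8 := hall 8 (by norm_num) (by norm_num)
      have a9 := hall 9 (by norm_num) (by norm_num)
      have hge : -8 ≤ f := by omega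
      have hle : f ≤ 30 := by
        by_contra hgt
        exact hf ⟨by omega, by omega⟩
      interval_cases f <;> omega
    · intro hf
      refine ⟨by omega, ?_⟩
      rintro s ⟨hs0, hs1⟩ hsne
      rcases hf with rfl|rfl|rfl|rfl <;> rcases hs1 with h|h|h|h|h|h|h|h <;> omega
  refine ⟨hAp, hPF, ?_, ?_⟩
  · rw [hPF, show ({23, 28, 29, 30} : Set ℤ) = (↑({23, 28, 29, 30} : Finset ℤ)) by simp,
      Set.ncard_coe_finset]
    rfl
  · rintro ⟨s, d, hd, hset⟩
    rw [hPF] at hset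
    have h23 : ∃ i : ℕ, 1 ≤ i ∧ i ≤ 4 ∧ (23 : ℤ) = s + (i : ℤ) * d := by
      have : (23:ℤ) ∈ ({23, 28, 29, 30} : Set ℤ) := by norm_num
      rw [hset] at this; exact this
    have h28 : ∃ i : ℕ, 1 ≤ i ∧ i ≤ 4 ∧ (28 : ℤ) = s + (i : ℤ) * d := by
      have : (28:ℤ) ∈ ({23, 28, 29, 30} : Set ℤ) := by norm_num
      rw [hset] at this; exact this
    have h29 : ∃ i : ℕ, 1 ≤ i ∧ i ≤ 4 ∧ (29 : ℤ) = s + (i : ℤ) * d := by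
      have : (29:ℤ) ∈ ({23, 28, 29, 30} : Set ℤ) := by norm_num
      rw [hset] at this; exact this
    obtain ⟨i1, hi1a, hi1b, hi1⟩ := h23
    obtain ⟨i2, hi2a, hi2b, hi2⟩ := h28
    obtain ⟨i3, hi3a, hi3b, hi3⟩ := h29
    interval_cases i1 <;> interval_cases i2 <;> interval_cases i3 <;> omega
end
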